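/- arXiv:math/0702481 — 3 statements merged into one kernel-verified Lean document; each statement's English description precedes it below -/
import Mathlib

section
/- As β → ∞, one has K_β ∼ √(2π) · β^{−3/2}; that is, lim_{β→∞} β^{3/2} K_β = √(2π). -/
open Filter MeasureTheory Set

namespace Stmt15Aux

noncomputable def s (x : ℝ) : ℝ := Real.sqrt (1 + x ^ 2)

lemma s_sq (x : ℝ) : s x ^ 2 = 1 + x ^ 2 := Real.sq_sqrt (by positivity)

lemma one_le_s (x : ℝ) : 1 ≤ s x := by
  rw [s, Real.le_sqrt one_pos.le (by positivity)]
  nlinarith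

lemma s_pos (x : ℝ) : 0 < s x := lt_of_lt_of_le one_pos (one_le_s x)

lemma le_s {x : ℝ} (hx : 0 ≤ x) : x ≤ s x := by
  rw [s, Real.le_sqrt hx (by positivity)]
  nlinarith

lemma continuous_s : Continuous s :=
  Real.continuous_sqrt.comp (by continuity)

lemma hasDerivAt_s (x : ℝ) : HasDerivAt s (x / s x) x := by
  have h1 : HasDerivAt (fun y : ℝ => 1 + y ^ 2) (2 * x) x := by
    simpa using ((hasDerivAt_pow 2 x).const_add 1)
  have h2 := (Real.hasDerivAt_sqrt (by positivity : (1:ℝ) + x ^ 2 ≠ 0)).comp x h1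
  refine h2.congr_deriv ?_
  rw [s]
  field_simp

/-- inner integrand -/
noncomputable def φ (β y : ℝ) : ℝ := y * Real.exp (β * (1 - s y)) / (1 + y ^ 2)

lemma continuous_φ (β : ℝ) : Continuous (φ β) := by
  apply Continuous.div
  · exact continuous_id.mul (Real.continuous_exp.comp (continuous_const.mul
      (continuous_const.sub continuous_s)))
  · continuity
  · intro x; positivity

lemma φ_nonneg {β y : ℝ} (hy : 0 ≤ y) : 0 ≤ φ β y := by
  unfold φ; positivity

lemma φ_le {β : ℝ} (hβ : 0 < β) {y : ℝ} (hy : 0 ≤ y) :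
    φ β y ≤ Real.exp β * Real.exp (-β * y) := by
  have h1 : y / (1 + y ^ 2) ≤ 1 := by
    rw [div_le_one (by positivity)]; nlinarith
  have h2 : Real.exp (β * (1 - s y)) ≤ Real.exp (β * (1 - y)) :=
    Real.exp_le_exp.2 (by nlinarith [le_s hy])
  calc φ β y = (y / (1 + y^2)) * Real.exp (β * (1 - s y)) := by rw [φ]; ring
    _ ≤ 1 * Real.exp (β * (1 - y)) :=
        mul_le_mul h1 h2 (Real.exp_pos _).le one_pos.le
    _ = Real.exp β * Real.exp (-β * y) := by
        rw [one_mul, ← Real.exp_add]; ring_nf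

lemma integrable_φ {β : ℝ} (hβ : 0 < β) {a : ℝ} (ha : 0 ≤ a) :
    IntegrableOn (φ β) (Ioi a) := by
  apply Integrable.mono' ((exp_neg_integrableOn_Ioi a hβ).const_mul (Real.exp β))
  · exact (continuous_φ β).aestronglyMeasurable.restrict
  · filter_upwards [ae_restrict_mem measurableSet_Ioi] with y hy
    have hy0 : 0 ≤ y := le_trans ha (le_of_lt hy)
    rw [Real.norm_eq_abs, abs_of_nonneg (φ_nonneg hy0)]
    exact φ_le hβ hy0



noncomputable def F1 (β y : ℝ) : ℝ := -(Real.exp (β * (1 - s y)) / (β * s y))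
noncomputable def E (β y : ℝ) : ℝ := Real.exp (β * (1 - s y)) / (β ^ 2 * (1 + y ^ 2))

lemma hasDerivAt_exp_part (β y : ℝ) :
    HasDerivAt (fun y => Real.exp (β * (1 - s y)))
      (Real.exp (β * (1 - s y)) * (β * (0 - y / s y))) y := by
  exact (((hasDerivAt_const y (1:ℝ)).sub (hasDerivAt_s y)).const_mul β).exp

lemma hasDerivAt_F1 {β : ℝ} (hβ : 0 < β) (y : ℝ) :
    HasDerivAt (F1 β) (φ β y * (1 + 1 / (β * s y))) y := by
  have hd : HasDerivAt (fun y => β * s y) (β * (y / s y)) y := (hasDerivAt_s y).const_mul β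
  have h := ((hasDerivAt_exp_part β y).div hd (by have := s_pos y; positivity)).neg
  refine h.congr_deriv ?_
  have hs := s_sq y
  have h0 : s y ≠ 0 := (s_pos y).ne'
  rw [φ, ← hs]
  field_simp
  ring

lemma hasDerivAt_E {β : ℝ} (hβ : 0 < β) (y : ℝ) :
    HasDerivAt (E β) (-(φ β y * (1 / (β * s y) + 2 / (β ^ 2 * (1 + y ^ 2))))) y := by
  have hd : HasDerivAt (fun y : ℝ => β ^ 2 * (1 + y ^ 2)) (β ^ 2 * (2 * y)) y := by
    simpa using ((hasDerivAt_pow 2 y).const_add 1).const_mul (β ^ 2)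
  have h := (hasDerivAt_exp_part β y).div hd (by positivity)
  refine h.congr_deriv ?_
  have hs := s_sq y
  have h0 : s y ≠ 0 := (s_pos y).ne'
  rw [φ, ← hs]
  field_simp
  ring

lemma tendsto_exp_part (β : ℝ) (hβ : 0 < β) :
    Tendsto (fun y => Real.exp (β * (1 - s y))) atTop (nhds 0) := by
  apply Real.tendsto_exp_atBot.comp
  apply Tendsto.const_mul_atBot hβ
  apply tendsto_atBot_add_const_left
  apply tendsto_neg_atBot_iff.2
  exact tendsto_atTop_mono (fun y => by
    rcases le_total 0 y with h | h
    · exact le_s h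
    · exact h.trans (s_pos y).le) tendsto_id

lemma tendsto_F1 {β : ℝ} (hβ : 0 < β) : Tendsto (F1 β) atTop (nhds 0) := by
  have h1 : Tendsto (fun y => (β * s y)⁻¹) atTop (nhds 0) := by
    apply Tendsto.inv_tendsto_atTop
    apply Tendsto.const_mul_atTop hβ
    exact tendsto_atTop_mono (fun y => by
      rcases le_total 0 y with h | h
      · exact le_s h
      · exact h.trans (s_pos y).le) tendsto_id
  have := ((tendsto_exp_part β hβ).mul h1).neg
  simp only [mul_zero, neg_zero] at this
  apply this.congr (fun y => by rw [F1, div_eq_mul_inv])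

lemma tendsto_E {β : ℝ} (hβ : 0 < β) : Tendsto (E β) atTop (nhds 0) := by
  have h1 : Tendsto (fun y : ℝ => (β ^ 2 * (1 + y ^ 2))⁻¹) atTop (nhds 0) := by
    apply Tendsto.inv_tendsto_atTop
    apply Tendsto.const_mul_atTop (by positivity)
    exact tendsto_atTop_add_const_left _ 1 (tendsto_pow_atTop (by norm_num))
  have := (tendsto_exp_part β hβ).mul h1
  simp only [mul_zero] at this
  apply this.congr (fun y => by rw [E, div_eq_mul_inv])



lemma integrable_F1' {β : ℝ} (hβ : 0 < β) {a : ℝ} (ha : 0 ≤ a) :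
    IntegrableOn (fun y => φ β y * (1 + 1 / (β * s y))) (Ioi a) := by
  apply Integrable.mono' (((integrable_φ hβ ha).const_mul (1 + 1 / β)))
  · apply Continuous.aestronglyMeasurable ((continuous_φ β).mul _) |>.restrict
    exact continuous_const.add (continuous_const.div
      (continuous_const.mul continuous_s) (fun y => by have := s_pos y; positivity))
  · filter_upwards [ae_restrict_mem measurableSet_Ioi] with y hy
    have hy0 : 0 ≤ y := le_trans ha (le_of_lt hy)
    have h1 : (0:ℝ) < s y := s_pos y
    have h2 : 1 ≤ s y := one_le_s y
    have h3 : 1 / (β * s y) ≤ 1 / β := by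
      apply one_div_le_one_div_of_le hβ; nlinarith
    have h4 : (0:ℝ) ≤ 1 + 1 / (β * s y) := by positivity
    rw [Real.norm_eq_abs, abs_of_nonneg (mul_nonneg (φ_nonneg hy0) h4)]
    have := φ_nonneg (β := β) hy0
    nlinarith

lemma integral_F1' {β : ℝ} (hβ : 0 < β) {a : ℝ} (ha : 0 ≤ a) :
    ∫ y in Ioi a, φ β y * (1 + 1 / (β * s y))
      = Real.exp (β * (1 - s a)) / (β * s a) := by
  rw [MeasureTheory.integral_Ioi_of_hasDerivAt_of_tendsto
    (hasDerivAt_F1 hβ a).continuousAt.continuousWithinAt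
    (fun y _ => hasDerivAt_F1 hβ y) (integrable_F1' hβ ha) (tendsto_F1 hβ)]
  rw [F1]; ring

lemma I_le {β : ℝ} (hβ : 0 < β) {a : ℝ} (ha : 0 ≤ a) :
    (∫ y in Ioi a, φ β y) ≤ Real.exp (β * (1 - s a)) / (β * s a) := by
  rw [← integral_F1' hβ ha]
  apply setIntegral_mono_on (integrable_φ hβ ha) (integrable_F1' hβ ha) measurableSet_Ioi
  intro y hy
  have hy0 : 0 ≤ y := le_trans ha (le_of_lt hy)
  have h1 : (0:ℝ) < s y := s_pos y
  have h2 : (0:ℝ) ≤ 1 / (β * s y) := by positivity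
  nlinarith [φ_nonneg (β := β) hy0]

lemma integrable_F2' {β : ℝ} (hβ : 0 < β) {a : ℝ} (ha : 0 ≤ a) :
    IntegrableOn (fun y => φ β y * (1 - 2 / (β ^ 2 * (1 + y ^ 2)))) (Ioi a) := by
  apply Integrable.mono' (((integrable_φ hβ ha).const_mul (1 + 2 / β ^ 2)))
  · apply Continuous.aestronglyMeasurable ((continuous_φ β).mul _) |>.restrict
    exact continuous_const.sub (continuous_const.div
      (continuous_const.mul (by continuity)) (fun y => by positivity))
  · filter_upwards [ae_restrict_mem measurableSet_Ioi] with y hy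
    have hy0 : 0 ≤ y := le_trans ha (le_of_lt hy)
    have h2 : (0:ℝ) < 1 + y ^ 2 := by positivity
    have h3 : 2 / (β ^ 2 * (1 + y ^ 2)) ≤ 2 / β ^ 2 := by
      apply div_le_div_of_nonneg_left (by norm_num) (by positivity); nlinarith
    have h5 : (0:ℝ) ≤ 2 / (β ^ 2 * (1 + y ^ 2)) := by positivity
    have h6 := φ_nonneg (β := β) hy0
    rw [Real.norm_eq_abs, abs_mul, abs_of_nonneg h6]
    have h7 : |1 - 2 / (β ^ 2 * (1 + y ^ 2))| ≤ 1 + 2 / β ^ 2 := by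
      rw [abs_le]; constructor <;> nlinarith
    nlinarith [abs_nonneg (1 - 2 / (β ^ 2 * (1 + y ^ 2)))]

lemma hasDerivAt_F2 {β : ℝ} (hβ : 0 < β) (y : ℝ) :
    HasDerivAt (fun y => F1 β y + E β y)
      (φ β y * (1 - 2 / (β ^ 2 * (1 + y ^ 2)))) y := by
  have h := (hasDerivAt_F1 hβ y).add (hasDerivAt_E hβ y)
  refine h.congr_deriv ?_; ring

lemma integral_F2' {β : ℝ} (hβ : 0 < β) {a : ℝ} (ha : 0 ≤ a) :
    ∫ y in Ioi a, φ β y * (1 - 2 / (β ^ 2 * (1 + y ^ 2)))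
      = Real.exp (β * (1 - s a)) / (β * s a)
        - Real.exp (β * (1 - s a)) / (β ^ 2 * (1 + a ^ 2)) := by
  rw [MeasureTheory.integral_Ioi_of_hasDerivAt_of_tendsto
    (hasDerivAt_F2 hβ a).continuousAt.continuousWithinAt
    (fun y _ => hasDerivAt_F2 hβ y) (integrable_F2' hβ ha)
    (by simpa using ((tendsto_F1 hβ).add (tendsto_E hβ)))]
  rw [F1, E]; ring

lemma I_ge {β : ℝ} (hβ : 0 < β) {a : ℝ} (ha : 0 ≤ a) :
    Real.exp (β * (1 - s a)) / (β * s a)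
        - Real.exp (β * (1 - s a)) / (β ^ 2 * (1 + a ^ 2))
      ≤ ∫ y in Ioi a, φ β y := by
  rw [← integral_F2' hβ ha]
  apply setIntegral_mono_on (integrable_F2' hβ ha) (integrable_φ hβ ha) measurableSet_Ioi
  intro y hy
  have hy0 : 0 ≤ y := le_trans ha (le_of_lt hy)
  have h2 : (0:ℝ) ≤ 2 / (β ^ 2 * (1 + y ^ 2)) := by positivity
  nlinarith [φ_nonneg (β := β) hy0]

lemma I_bounds {β : ℝ} (hβ : 1 ≤ β) {a : ℝ} (ha : 0 ≤ a) :
    (1 - 1 / β) * (Real.exp (β * (1 - s a)) / (β * s a)) ≤ (∫ y in Ioi a, φ β y)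
    ∧ (∫ y in Ioi a, φ β y) ≤ Real.exp (β * (1 - s a)) / (β * s a) := by
  have hβ0 : 0 < β := lt_of_lt_of_le one_pos hβ
  refine ⟨?_, I_le hβ0 ha⟩
  refine le_trans ?_ (I_ge hβ0 ha)
  have hs1 : 1 ≤ s a := one_le_s a
  have hs0 : 0 < s a := s_pos a
  have hsq : s a ^ 2 = 1 + a ^ 2 := s_sq a
  have he : 0 < Real.exp (β * (1 - s a)) := Real.exp_pos _
  rw [← hsq]
  rw [show Real.exp (β * (1 - s a)) / (β ^ 2 * s a ^ 2)
      = (Real.exp (β * (1 - s a)) / (β * s a)) * (1 / (β * s a)) by field_simp]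
  have h3 : 1 / (β * s a) ≤ 1 / β := by
    apply one_div_le_one_div_of_le hβ0; nlinarith
  have h4 : 0 < Real.exp (β * (1 - s a)) / (β * s a) := by positivity
  nlinarith



noncomputable def I (β x : ℝ) : ℝ := ∫ y in Ioi x, φ β y
noncomputable def w (β x : ℝ) : ℝ := Real.exp (β * (1 - s x)) / (1 + x ^ 2)
noncomputable def Kf (β x : ℝ) : ℝ := (I β x) ^ 2 * Real.exp (β * (s x - 1))

lemma meas_I {β : ℝ} (hβ : 0 < β) :
    AEStronglyMeasurable (I β) (MeasureTheory.volume.restrict (Ioi (0:ℝ))) := by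
  have hanti : Antitone (fun x => ∫ y in Ioi (max x 0), φ β y) := by
    intro x₁ x₂ h
    apply setIntegral_mono_set (integrable_φ hβ (le_max_right x₁ 0))
    · filter_upwards [ae_restrict_mem measurableSet_Ioi] with y hy
      exact φ_nonneg (le_trans (le_max_right x₁ 0) (le_of_lt hy))
    · exact Filter.Eventually.of_forall
        (Ioi_subset_Ioi (max_le_max h (le_refl 0)))
  apply (hanti.measurable.aestronglyMeasurable (α := ℝ)).congr
  rw [Filter.EventuallyEq, ae_restrict_iff' measurableSet_Ioi]
  filter_upwards with x hx
  rw [I, max_eq_left hx.le]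

lemma w_nonneg (β x : ℝ) : 0 ≤ w β x := by rw [w]; positivity

lemma continuous_w (β : ℝ) : Continuous (w β) := by
  apply Continuous.div
  · exact Real.continuous_exp.comp (continuous_const.mul (continuous_const.sub continuous_s))
  · continuity
  · intro x; positivity

lemma integrable_w {β : ℝ} (hβ : 0 < β) : IntegrableOn (w β) (Ioi (0:ℝ)) := by
  apply Integrable.mono' (integrable_inv_one_add_sq.integrableOn (s := Ioi (0:ℝ)))
  · exact (continuous_w β).aestronglyMeasurable.restrict
  · filter_upwards with x
    rw [Real.norm_eq_abs, abs_of_nonneg (w_nonneg β x), w]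
    have h1 : Real.exp (β * (1 - s x)) ≤ 1 :=
      Real.exp_le_one_iff.2 (by nlinarith [one_le_s x])
    rw [div_le_iff₀ (by positivity : (0:ℝ) < 1 + x ^ 2)]
    rw [inv_mul_cancel₀ (by positivity : (1:ℝ) + x ^ 2 ≠ 0)] at *
    linarith

lemma Kf_bounds {β : ℝ} (hβ : 1 ≤ β) {x : ℝ} (hx : 0 ≤ x) :
    (1 - 1 / β) ^ 2 * (w β x / β ^ 2) ≤ Kf β x ∧ Kf β x ≤ w β x / β ^ 2 := by
  have hβ0 : 0 < β := lt_of_lt_of_le one_pos hβ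
  obtain ⟨hlo, hhi⟩ := I_bounds hβ hx
  have hs0 : 0 < s x := s_pos x
  have hsq : s x ^ 2 = 1 + x ^ 2 := s_sq x
  set u := Real.exp (β * (1 - s x)) / (β * s x) with hu
  have hu0 : 0 < u := by rw [hu]; positivity
  have hc : 0 ≤ 1 - 1 / β := by
    have : 1 / β ≤ 1 := by rw [div_le_one hβ0]; linarith
    linarith
  have hI0 : (0:ℝ) ≤ ∫ y in Ioi x, φ β y := le_trans (by positivity) hlo
  have he : 0 < Real.exp (β * (s x - 1)) := Real.exp_pos _
  have hkey : u ^ 2 * Real.exp (β * (s x - 1)) = w β x / β ^ 2 := by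
    rw [hu, w, div_pow, ← hsq]
    rw [show Real.exp (β * (1 - s x)) ^ 2 = Real.exp (2 * (β * (1 - s x))) by
      rw [sq, ← Real.exp_add]; ring_nf]
    rw [div_mul_eq_mul_div, ← Real.exp_add, mul_pow]
    rw [show 2 * (β * (1 - s x)) + β * (s x - 1) = β * (1 - s x) by ring]
    rw [show β ^ 2 * s x ^ 2 = s x ^ 2 * β ^ 2 by ring, ← div_div]
  constructor
  · rw [← hkey, Kf, I]
    have h2 : ((1 - 1/β) * u) ^ 2 ≤ (∫ y in Ioi x, φ β y) ^ 2 :=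
      pow_le_pow_left₀ (mul_nonneg hc hu0.le) hlo 2
    nlinarith
  · rw [← hkey, Kf, I]
    have h2 : (∫ y in Ioi x, φ β y) ^ 2 ≤ u ^ 2 := pow_le_pow_left₀ hI0 hhi 2
    nlinarith

lemma integrable_Kf {β : ℝ} (hβ : 1 ≤ β) : IntegrableOn (Kf β) (Ioi (0:ℝ)) := by
  have hβ0 : 0 < β := lt_of_lt_of_le one_pos hβ
  apply Integrable.mono' ((integrable_w hβ0).const_mul (1 / β ^ 2))
  · have hm : AEStronglyMeasurable (fun x => (I β x * I β x) *
        Real.exp (β * (s x - 1))) (MeasureTheory.volume.restrict (Ioi (0:ℝ))) :=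
      ((meas_I hβ0).mul (meas_I hβ0)).mul
        ((Real.continuous_exp.comp (continuous_const.mul
          (continuous_s.sub continuous_const))).aestronglyMeasurable.restrict)
    apply hm.congr
    filter_upwards with x
    rw [Kf, sq]
  · filter_upwards [ae_restrict_mem measurableSet_Ioi] with x hx
    have := (Kf_bounds hβ hx.le).2
    have h0 : 0 ≤ Kf β x := by rw [Kf]; positivity
    rw [Real.norm_eq_abs, abs_of_nonneg h0, one_div, inv_mul_eq_div]
    exact this

lemma integral_Kf_bounds {β : ℝ} (hβ : 1 ≤ β) :
    (1 - 1 / β) ^ 2 / β ^ 2 * (∫ x in Ioi (0:ℝ), w β x)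
      ≤ (∫ x in Ioi (0:ℝ), Kf β x)
    ∧ (∫ x in Ioi (0:ℝ), Kf β x) ≤ (∫ x in Ioi (0:ℝ), w β x) / β ^ 2 := by
  have hβ0 : 0 < β := lt_of_lt_of_le one_pos hβ
  constructor
  · rw [div_mul_eq_mul_div, mul_div_assoc, ← MeasureTheory.integral_div,
      ← MeasureTheory.integral_const_mul]
    apply setIntegral_mono_on (((integrable_w hβ0).div_const _).const_mul _)
      (integrable_Kf hβ) measurableSet_Ioi
    intro x hx
    exact (Kf_bounds hβ hx.le).1
  · rw [← MeasureTheory.integral_div]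
    apply setIntegral_mono_on (integrable_Kf hβ) ((integrable_w hβ0).div_const _)
      measurableSet_Ioi
    intro x hx
    exact (Kf_bounds hβ hx.le).2



/-- rescaled integrand -/
noncomputable def g (β v : ℝ) : ℝ :=
    Real.exp (-(v ^ 2 / (1 + Real.sqrt (1 + v ^ 2 / β)))) / (1 + v ^ 2 / β)

lemma w_scaled {β : ℝ} (hβ : 0 < β) (v : ℝ) :
    w β ((Real.sqrt β)⁻¹ * v) = g β v := by
  have hsβ : Real.sqrt β > 0 := Real.sqrt_pos.2 hβ
  have hx2 : ((Real.sqrt β)⁻¹ * v) ^ 2 = v ^ 2 / β := by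
    rw [mul_pow, inv_pow, Real.sq_sqrt hβ.le]
    ring
  have ht0 : 0 ≤ v ^ 2 / β := by positivity
  have hr0 : 0 ≤ Real.sqrt (1 + v ^ 2 / β) := Real.sqrt_nonneg _
  have hr2 : Real.sqrt (1 + v ^ 2 / β) ^ 2 = 1 + v ^ 2 / β :=
    Real.sq_sqrt (by positivity)
  have key : β * (1 - Real.sqrt (1 + v ^ 2 / β))
      = -(v ^ 2 / (1 + Real.sqrt (1 + v ^ 2 / β))) := by
    have h1 : (1 - Real.sqrt (1 + v ^ 2 / β)) * (1 + Real.sqrt (1 + v ^ 2 / β))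
        = -(v ^ 2 / β) := by nlinarith
    have h2 : (0:ℝ) < 1 + Real.sqrt (1 + v ^ 2 / β) := by linarith
    have h3 : β * (1 - Real.sqrt (1 + v ^ 2 / β)) * (1 + Real.sqrt (1 + v ^ 2 / β))
        = -(v ^ 2) := by
      rw [mul_assoc, h1]
      field_simp
    rw [← neg_div, eq_div_iff h2.ne']
    linarith
  rw [w, s, hx2, key, g]

lemma cov {β : ℝ} (hβ : 0 < β) :
    Real.sqrt β * ∫ x in Ioi (0:ℝ), w β x = ∫ v in Ioi (0:ℝ), g β v := by
  have hsβ : (0:ℝ) < (Real.sqrt β)⁻¹ := by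
    rw [inv_pos]; exact Real.sqrt_pos.2 hβ
  have h := MeasureTheory.integral_comp_mul_left_Ioi (w β) 0 hsβ
  rw [mul_zero, inv_inv, smul_eq_mul] at h
  rw [← h]
  apply setIntegral_congr_fun measurableSet_Ioi
  intro v _
  exact w_scaled hβ v

lemma g_le_bound {β : ℝ} (hβ : 1 ≤ β) {v : ℝ} (hv : 0 < v) :
    g β v ≤ Real.exp 1 * Real.exp (-(1/2) * v) := by
  have hβ0 : 0 < β := lt_of_lt_of_le one_pos hβ
  have ht0 : 0 ≤ v ^ 2 / β := by positivity
  set r := Real.sqrt (1 + v ^ 2 / β) with hr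
  have hr0 : 0 ≤ r := Real.sqrt_nonneg _
  have hrle : r ≤ 1 + v := by
    rw [hr]
    have h1 : Real.sqrt (1 + v ^ 2 / β) ≤ Real.sqrt (1 + v ^ 2) := by
      apply Real.sqrt_le_sqrt
      have : v ^ 2 / β ≤ v ^ 2 := by
        rw [div_le_iff₀ hβ0]; nlinarith
      linarith
    have h2 : Real.sqrt (1 + v ^ 2) ≤ 1 + v := by
      rw [show (1:ℝ) + v = Real.sqrt ((1 + v) ^ 2) by rw [Real.sqrt_sq (by linarith)]]
      apply Real.sqrt_le_sqrt; nlinarith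
    linarith
  have hden : (0:ℝ) < 1 + r := by linarith
  have step1 : -(v ^ 2 / (1 + r)) ≤ 1 - (1/2) * v := by
    rw [← neg_div, div_le_iff₀ hden]
    rcases le_or_gt v 2 with h | h
    · nlinarith
    · nlinarith [mul_le_mul_of_nonpos_left (by linarith : 1 + r ≤ 2 + v)
        (by linarith : 1 - (1/2) * v ≤ 0)]
  have hfrac : (1 + v ^ 2 / β)⁻¹ ≤ 1 := by
    rw [inv_le_one_iff₀]; right; linarith
  have : g β v ≤ Real.exp (-(v ^ 2 / (1 + r))) := by
    rw [g, div_eq_mul_inv, ← hr]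
    nlinarith [Real.exp_pos (-(v ^ 2 / (1 + r))), (Real.exp_pos (-(v ^ 2 / (1 + r)))).le]
  calc g β v ≤ Real.exp (-(v ^ 2 / (1 + r))) := this
    _ ≤ Real.exp (1 - (1/2) * v) := Real.exp_le_exp.2 step1
    _ = Real.exp 1 * Real.exp (-(1/2) * v) := by rw [← Real.exp_add]; ring_nf

lemma g_tendsto (v : ℝ) :
    Tendsto (fun β => g β v) atTop (nhds (Real.exp (-(v ^ 2 / 2)))) := by
  have h1 : Tendsto (fun β : ℝ => v ^ 2 / β) atTop (nhds 0) :=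
    Tendsto.div_atTop tendsto_const_nhds tendsto_id
  have hΦ : ContinuousAt (fun t : ℝ =>
      Real.exp (-(v ^ 2 / (1 + Real.sqrt (1 + t)))) / (1 + t)) 0 := by
    apply ContinuousAt.div
    · apply Real.continuous_exp.continuousAt.comp
      apply ContinuousAt.neg
      apply ContinuousAt.div continuousAt_const
      · exact (continuousAt_const.add ((Real.continuous_sqrt.continuousAt).comp
          (continuousAt_const.add continuousAt_id)))
      · simp [Real.sqrt_one]
    · exact continuousAt_const.add continuousAt_id
    · norm_num
  have h2 := hΦ.tendsto.comp h1
  simp only [Function.comp_def] at h2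
  have h3 : Real.exp (-(v ^ 2 / (1 + Real.sqrt (1 + 0)))) / (1 + 0)
      = Real.exp (-(v ^ 2 / 2)) := by
    rw [add_zero, Real.sqrt_one]
    norm_num
  rw [h3] at h2
  exact h2

lemma tendsto_G :
    Tendsto (fun β : ℝ => 2 * (Real.sqrt β * ∫ x in Ioi (0:ℝ), w β x)) atTop
      (nhds (Real.sqrt (2 * Real.pi))) := by
  have hmain : Tendsto (fun β : ℝ => ∫ v in Ioi (0:ℝ), g β v) atTop
      (nhds (∫ v in Ioi (0:ℝ), Real.exp (-(v ^ 2 / 2)))) := by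
    apply MeasureTheory.tendsto_integral_filter_of_dominated_convergence
      (fun v => Real.exp 1 * Real.exp (-(1/2) * v))
    · filter_upwards [eventually_ge_atTop (1:ℝ)] with β hβ
      have hβ0 : 0 < β := lt_of_lt_of_le one_pos hβ
      have hc : Continuous (g β) := by
        unfold g
        apply Continuous.div
        · apply Real.continuous_exp.comp
          apply Continuous.neg
          apply Continuous.div (continuous_pow 2)
          · exact continuous_const.add (Real.continuous_sqrt.comp
              (continuous_const.add (continuous_pow 2 |>.div_const β)))
          · intro v
            have : (0:ℝ) ≤ Real.sqrt (1 + v ^ 2 / β) := Real.sqrt_nonneg _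
            linarith
        · exact continuous_const.add (continuous_pow 2 |>.div_const β)
        · intro v
          have : (0:ℝ) ≤ v ^ 2 / β := by positivity
          linarith
      exact hc.aestronglyMeasurable.restrict
    · filter_upwards [eventually_ge_atTop (1:ℝ)] with β hβ
      filter_upwards [ae_restrict_mem measurableSet_Ioi] with v hv
      have h0 : 0 ≤ g β v := by rw [g]; positivity
      rw [Real.norm_eq_abs, abs_of_nonneg h0]
      exact g_le_bound hβ hv
    · exact (exp_neg_integrableOn_Ioi 0 (by norm_num : (0:ℝ) < 1/2)).const_mul _
    · filter_upwards with v
      exact g_tendsto v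
  have hval : ∫ v in Ioi (0:ℝ), Real.exp (-(v ^ 2 / 2)) = Real.sqrt (2 * Real.pi) / 2 := by
    have hg := integral_gaussian_Ioi (1/2)
    rw [show Real.pi / (1/2) = 2 * Real.pi by ring] at hg
    rw [← hg]
    apply setIntegral_congr_fun measurableSet_Ioi
    intro v _
    exact congrArg Real.exp (by ring)
  have h4 := hmain.const_mul (2:ℝ)
  rw [hval, show 2 * (Real.sqrt (2 * Real.pi) / 2) = Real.sqrt (2 * Real.pi) by ring] at h4
  apply Tendsto.congr' _ h4
  filter_upwards [eventually_gt_atTop (0:ℝ)] with β hβ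
  rw [cov hβ]


end Stmt15Aux

open Stmt15Aux in
/-- As β → ∞, K_β ∼ √(2π) β^{−3/2}, i.e. β^{3/2} K_β → √(2π). -/
theorem stmt15 :
    Tendsto (fun β : ℝ => β ^ ((3:ℝ)/2) *
        (2 * β * ∫ x in Ioi (0:ℝ),
          (∫ y in Ioi x, y * Real.exp (β * (1 - Real.sqrt (1 + y ^ 2))) / (1 + y ^ 2)) ^ 2
            * Real.exp (β * (Real.sqrt (1 + x ^ 2) - 1))))
      atTop (nhds (Real.sqrt (2 * Real.pi))) := by
  have heq : (fun β : ℝ => β ^ ((3:ℝ)/2) *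
        (2 * β * ∫ x in Ioi (0:ℝ),
          (∫ y in Ioi x, y * Real.exp (β * (1 - Real.sqrt (1 + y ^ 2))) / (1 + y ^ 2)) ^ 2
            * Real.exp (β * (Real.sqrt (1 + x ^ 2) - 1))))
      = (fun β : ℝ => β ^ ((3:ℝ)/2) * (2 * β * ∫ x in Ioi (0:ℝ), Kf β x)) := rfl
  rw [heq]
  have h1 : Tendsto (fun β : ℝ => 1 - 1/β) atTop (nhds 1) := by
    have h0 : Tendsto (fun β : ℝ => 1/β) atTop (nhds 0) := by
      simpa [one_div] using tendsto_inv_atTop_zero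
    simpa using (tendsto_const_nhds (x := (1:ℝ)) (f := atTop)).sub h0
  have hg : Tendsto (fun β : ℝ => (1 - 1/β) ^ 2 *
      (2 * (Real.sqrt β * ∫ x in Ioi (0:ℝ), w β x))) atTop
      (nhds (Real.sqrt (2 * Real.pi))) := by
    have := ((h1.pow 2).mul tendsto_G)
    simpa using this
  apply tendsto_of_tendsto_of_tendsto_of_le_of_le' hg tendsto_G
  · filter_upwards [eventually_ge_atTop (1:ℝ)] with β hβ
    have hβ0 : 0 < β := lt_of_lt_of_le one_pos hβ
    have hpow : β ^ ((3:ℝ)/2) = Real.sqrt β * β := by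
      rw [show ((3:ℝ)/2) = 1/2 + 1 by norm_num, Real.rpow_add hβ0, Real.rpow_one,
        ← Real.sqrt_eq_rpow]
    rw [hpow]
    set A := ∫ x in Ioi (0:ℝ), w β x with hA
    set T := ∫ x in Ioi (0:ℝ), Kf β x with hT
    have hlo := (integral_Kf_bounds hβ).1
    have hlo' : (1 - 1/β) ^ 2 * A ≤ β ^ 2 * T := by
      have h2 := mul_le_mul_of_nonneg_left hlo (sq_nonneg β)
      have h3 : β ^ 2 * ((1 - 1/β) ^ 2 / β ^ 2 * A) = (1 - 1/β) ^ 2 * A := by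
        field_simp
      linarith
    nlinarith [mul_le_mul_of_nonneg_left hlo'
      (show (0:ℝ) ≤ 2 * Real.sqrt β by positivity), Real.sqrt_nonneg β]
  · filter_upwards [eventually_ge_atTop (1:ℝ)] with β hβ
    have hβ0 : 0 < β := lt_of_lt_of_le one_pos hβ
    have hpow : β ^ ((3:ℝ)/2) = Real.sqrt β * β := by
      rw [show ((3:ℝ)/2) = 1/2 + 1 by norm_num, Real.rpow_add hβ0, Real.rpow_one,
        ← Real.sqrt_eq_rpow]
    rw [hpow]
    set A := ∫ x in Ioi (0:ℝ), w β x with hA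
    set T := ∫ x in Ioi (0:ℝ), Kf β x with hT
    have hhi := (integral_Kf_bounds hβ).2
    have hhi' : β ^ 2 * T ≤ A := by
      have h2 := mul_le_mul_of_nonneg_left hhi (sq_nonneg β)
      have h3 : β ^ 2 * (A / β ^ 2) = A := by field_simp
      linarith
    nlinarith [mul_le_mul_of_nonneg_left hhi'
      (show (0:ℝ) ≤ 2 * Real.sqrt β by positivity), Real.sqrt_nonneg β]
end

section
/- As β → 0⁺, K_β converges to 2 A₀, where A₀ := ∫₀^∞ ( ∫_x^∞ e^{−u} u^{−1} du )² eˣ dx (a finite positive constant). -/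
open Filter MeasureTheory Set
open scoped ENNReal

noncomputable def E1 (t : ℝ) : ℝ := ∫ u in Ioi t, Real.exp (-u) * u⁻¹
noncomputable def Jb (β t : ℝ) : ℝ := ∫ u in Ioi t, Real.exp (-u) * (u + β)⁻¹
noncomputable def Fb (β t : ℝ) : ℝ :=
  (Jb β t) ^ 2 * Real.exp t * ((t + β) / Real.sqrt (t ^ 2 + 2 * β * t))

lemma E1_integrand_int {t : ℝ} (ht : 0 < t) :
    IntegrableOn (fun u => Real.exp (-u) * u⁻¹) (Ioi t) := by
  have h := (exp_neg_integrableOn_Ioi t (zero_lt_one)).const_mul t⁻¹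
  refine Integrable.mono h ?_ ?_
  · exact ((Real.measurable_exp.comp measurable_neg).mul measurable_inv).aestronglyMeasurable
  · filter_upwards [ae_restrict_mem measurableSet_Ioi] with u hu
    have hu0 : 0 < u := ht.trans hu
    simp only [Real.norm_eq_abs, neg_one_mul]
    rw [abs_of_nonneg (by positivity), abs_of_nonneg (by positivity), mul_comm t⁻¹]
    exact mul_le_mul_of_nonneg_left (inv_anti₀ ht hu.le) (Real.exp_pos _).le

lemma Jb_integrand_int {β : ℝ} (hβ : 0 < β) {t : ℝ} (ht : 0 ≤ t) :
    IntegrableOn (fun u => Real.exp (-u) * (u + β)⁻¹) (Ioi t) := by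
  have h := (exp_neg_integrableOn_Ioi t (zero_lt_one)).const_mul β⁻¹
  refine Integrable.mono h ?_ ?_
  · exact ((Real.measurable_exp.comp measurable_neg).mul
      ((measurable_id.add_const β).inv)).aestronglyMeasurable
  · filter_upwards [ae_restrict_mem measurableSet_Ioi] with u hu
    have hu0 : 0 < u + β := by have := lt_of_le_of_lt ht hu; linarith
    simp only [Real.norm_eq_abs, neg_one_mul]
    rw [abs_of_nonneg (by positivity), abs_of_nonneg (by positivity), mul_comm β⁻¹]
    refine mul_le_mul_of_nonneg_left (inv_anti₀ hβ ?_) (Real.exp_pos _).le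
    have : t < u := hu
    linarith

lemma E1_nonneg {t : ℝ} (ht : 0 ≤ t) : 0 ≤ E1 t := by
  refine setIntegral_nonneg measurableSet_Ioi fun u hu => ?_
  have : 0 < u := lt_of_le_of_lt ht hu
  positivity

lemma Jb_nonneg {β t : ℝ} (hβ : 0 ≤ β) (ht : 0 ≤ t) : 0 ≤ Jb β t := by
  refine setIntegral_nonneg measurableSet_Ioi fun u hu => ?_
  have : 0 < u := lt_of_le_of_lt ht hu
  have : 0 ≤ u + β := by linarith
  have := Real.exp_pos (-u)
  positivity

lemma Ioi_split {g : ℝ → ℝ} {a t : ℝ} (h : a ≤ t) (hint : IntegrableOn g (Ioi a)) :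
    ∫ u in Ioi t, g u = (∫ u in Ioi a, g u) - ∫ u in Ioc a t, g u := by
  have hu : Ioc a t ∪ Ioi t = Ioi a := Ioc_union_Ioi_eq_Ioi h
  have h2 : ∫ u in Ioi a, g u = (∫ u in Ioc a t, g u) + ∫ u in Ioi t, g u := by
    rw [← hu]
    exact setIntegral_union (Ioc_disjoint_Ioi le_rfl) measurableSet_Ioi
      (hint.mono_set (hu ▸ subset_union_left)) (hint.mono_set (hu ▸ subset_union_right))
  linarith

lemma cont_Ioi_integral {g gg : ℝ → ℝ} {ε : ℝ} (hgg : Continuous gg)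
    (heq : ∀ u ∈ Ioi ε, g u = gg u) (hint : IntegrableOn g (Ioi ε)) :
    ContinuousOn (fun t => ∫ u in Ioi t, g u) (Ici ε) := by
  have key : ∀ t ∈ Ici ε, (∫ u in Ioi t, g u)
      = (∫ u in Ioi ε, g u) - ∫ s in ε..t, gg s := by
    intro t ht
    rw [Ioi_split ht hint, intervalIntegral.integral_of_le ht]
    congr 1
    exact setIntegral_congr_fun measurableSet_Ioc (fun u hu => heq u hu.1)
  refine ContinuousOn.congr ?_ key
  exact (continuous_const.sub
    (intervalIntegral.continuous_primitive (fun a b => hgg.intervalIntegrable a b) ε)).continuousOn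
lemma contOn_Jb {β : ℝ} (hβ : 0 < β) : ContinuousOn (Jb β) (Ici 0) := by
  have hgg : Continuous (fun u : ℝ => Real.exp (-u) * (|u| + β)⁻¹) := by
    refine (Real.continuous_exp.comp continuous_neg).mul (Continuous.inv₀ ?_ ?_)
    · exact continuous_abs.add continuous_const
    · intro u; positivity
  refine cont_Ioi_integral hgg (fun u hu => ?_) (Jb_integrand_int hβ le_rfl)
  have : (0:ℝ) < u := hu
  rw [abs_of_pos this]

lemma contAt_E1 {t : ℝ} (ht : 0 < t) : ContinuousAt E1 t := by
  set ε := t / 2 with hε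
  have hε0 : 0 < ε := by positivity
  have hgg : Continuous (fun u : ℝ => Real.exp (-u) * (|u - ε| + ε)⁻¹) := by
    refine (Real.continuous_exp.comp continuous_neg).mul (Continuous.inv₀ ?_ ?_)
    · exact ((continuous_abs.comp (continuous_id.sub continuous_const)).add continuous_const)
    · intro u; positivity
  have hcont : ContinuousOn E1 (Ici ε) := by
    refine cont_Ioi_integral hgg (fun u hu => ?_) (E1_integrand_int hε0)
    have h1 : ε < u := hu
    have : |u - ε| = u - ε := abs_of_pos (by linarith)
    rw [this]
    ring_nf
  exact hcont.continuousAt (Ici_mem_nhds (by linarith))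

lemma contOn_E1 : ContinuousOn E1 (Ioi 0) :=
  fun t ht => (contAt_E1 ht).continuousWithinAt

lemma Jb_le_E1 {β t : ℝ} (hβ : 0 < β) (ht : 0 < t) : Jb β t ≤ E1 t := by
  refine setIntegral_mono_on (Jb_integrand_int hβ ht.le) (E1_integrand_int ht)
    measurableSet_Ioi (fun u hu => ?_)
  have hu0 : 0 < u := ht.trans hu
  have : u ≤ u + β := by linarith
  exact mul_le_mul_of_nonneg_left (inv_anti₀ hu0 this) (Real.exp_pos _).le

lemma integral_exp_neg_Ioi' (t : ℝ) : ∫ u in Ioi t, Real.exp (-u) = Real.exp (-t) :=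
  integral_exp_neg_Ioi t

lemma E1_le_exp {t : ℝ} (ht : 0 < t) : E1 t ≤ Real.exp (-t) / t := by
  have h1 : E1 t ≤ ∫ u in Ioi t, Real.exp (-u) * t⁻¹ := by
    refine setIntegral_mono_on (E1_integrand_int ht)
      ((exp_neg_integrableOn_Ioi t zero_lt_one).congr_fun ?_ measurableSet_Ioi |>.mul_const t⁻¹)
      measurableSet_Ioi (fun u hu => ?_)
    · intro u _; simp
    · exact mul_le_mul_of_nonneg_left (inv_anti₀ ht hu.le) (Real.exp_pos _).le
  calc E1 t ≤ ∫ u in Ioi t, Real.exp (-u) * t⁻¹ := h1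
    _ = (∫ u in Ioi t, Real.exp (-u)) * t⁻¹ := by rw [integral_mul_const]
    _ = Real.exp (-t) / t := by rw [integral_exp_neg_Ioi', div_eq_mul_inv]

lemma Jb_le_exp {β t : ℝ} (hβ : 0 < β) (ht : 0 ≤ t) : Jb β t ≤ Real.exp (-t) / β := by
  have h1 : Jb β t ≤ ∫ u in Ioi t, Real.exp (-u) * β⁻¹ := by
    refine setIntegral_mono_on (Jb_integrand_int hβ ht)
      ((exp_neg_integrableOn_Ioi t zero_lt_one).congr_fun ?_ measurableSet_Ioi |>.mul_const β⁻¹)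
      measurableSet_Ioi (fun u hu => ?_)
    · intro u _; simp
    · refine mul_le_mul_of_nonneg_left (inv_anti₀ hβ ?_) (Real.exp_pos _).le
      have : t < u := hu
      linarith
  calc Jb β t ≤ ∫ u in Ioi t, Real.exp (-u) * β⁻¹ := h1
    _ = (∫ u in Ioi t, Real.exp (-u)) * β⁻¹ := by rw [integral_mul_const]
    _ = Real.exp (-t) / β := by rw [integral_exp_neg_Ioi', div_eq_mul_inv]
lemma exp_neg_mul_inv_le {u : ℝ} (hu : 0 < u) :
    Real.exp (-u) * u⁻¹ ≤ u ^ (-(9:ℝ)/8) := by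
  have h1 : u ^ ((1:ℝ)/8) ≤ Real.exp u := by
    rcases le_total u 1 with h | h
    · calc u ^ ((1:ℝ)/8) ≤ 1 := Real.rpow_le_one hu.le h (by norm_num)
        _ ≤ Real.exp u := by nlinarith [Real.add_one_le_exp u, hu]
    · calc u ^ ((1:ℝ)/8) ≤ u ^ (1:ℝ) := Real.rpow_le_rpow_of_exponent_le h (by norm_num)
        _ = u := Real.rpow_one u
        _ ≤ Real.exp u := by nlinarith [Real.add_one_le_exp u]
  have h2 : Real.exp (-u) ≤ u ^ (-(1:ℝ)/8) := by
    rw [Real.exp_neg, show (-(1:ℝ)/8) = -((1:ℝ)/8) by ring, Real.rpow_neg hu.le]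
    exact inv_anti₀ (Real.rpow_pos_of_pos hu _) h1
  calc Real.exp (-u) * u⁻¹ ≤ u ^ (-(1:ℝ)/8) * u⁻¹ :=
        mul_le_mul_of_nonneg_right h2 (by positivity)
    _ = u ^ (-(9:ℝ)/8) := by
        rw [← Real.rpow_neg_one u, ← Real.rpow_add hu]; norm_num

lemma E1_le_rpow {t : ℝ} (ht : 0 < t) : E1 t ≤ 8 * t ^ (-(1:ℝ)/8) := by
  have hint : IntegrableOn (fun u : ℝ => u ^ (-(9:ℝ)/8)) (Ioi t) :=
    integrableOn_Ioi_rpow_of_lt (by norm_num) ht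
  have h1 : E1 t ≤ ∫ u in Ioi t, u ^ (-(9:ℝ)/8) := by
    refine setIntegral_mono_on (E1_integrand_int ht) hint measurableSet_Ioi (fun u hu => ?_)
    exact exp_neg_mul_inv_le (ht.trans hu)
  have h2 : ∫ u in Ioi t, u ^ (-(9:ℝ)/8) = 8 * t ^ (-(1:ℝ)/8) := by
    rw [integral_Ioi_rpow_of_lt (by norm_num) ht, show (-(9:ℝ)/8 + 1) = -(1/8) by ring,
      show (-(1:ℝ)/8) = -((1:ℝ)/8) by ring]
    ring
  linarith
noncomputable def DD (t : ℝ) : ℝ :=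
  if t ≤ 1 then 128 * Real.exp 1 * t ^ (-(3:ℝ)/4) else 2 * Real.exp (-t)

lemma DD_int : IntegrableOn DD (Ioi 0) := by
  rw [← Ioc_union_Ioi_eq_Ioi (zero_le_one : (0:ℝ) ≤ 1), integrableOn_union]
  constructor
  · have h : IntegrableOn (fun t : ℝ => 128 * Real.exp 1 * t ^ (-(3:ℝ)/4)) (Ioc 0 1) := by
      have := intervalIntegral.intervalIntegrable_rpow' (a := 0) (b := 1)
        (r := -(3:ℝ)/4) (by norm_num)
      rw [intervalIntegrable_iff] at this
      simpa [IntegrableOn, uIoc_of_le (zero_le_one : (0:ℝ) ≤ 1)] using this.const_mul (128 * Real.exp 1)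
    refine h.congr_fun (fun t ht => ?_) measurableSet_Ioc
    rw [DD, if_pos ht.2]
  · have h : IntegrableOn (fun t : ℝ => 2 * Real.exp (-t)) (Ioi 1) := by
      have h2 := (exp_neg_integrableOn_Ioi (1:ℝ) zero_lt_one).const_mul 2
      refine IntegrableOn.congr_fun h2 (fun t _ => ?_) measurableSet_Ioi
      simp
    refine h.congr_fun (fun t ht => ?_) measurableSet_Ioi
    rw [DD, if_neg (not_le.2 ht)]

lemma ratio_le {β t : ℝ} (hβ : 0 < β) (hβ1 : β ≤ 1) (ht : 0 < t) :
    (t + β) / Real.sqrt (t ^ 2 + 2 * β * t) ≤ 1 + t ^ (-(1:ℝ)/2) := by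
  have hq : 0 < t ^ 2 + 2 * β * t := by nlinarith
  have hs : 0 < Real.sqrt (t ^ 2 + 2 * β * t) := Real.sqrt_pos.2 hq
  set s := t ^ (-(1:ℝ)/2) with hsdef
  have hs0 : 0 ≤ s := Real.rpow_nonneg ht.le _
  have hst : s ^ 2 * t = 1 := by
    have he : ((-(1:ℝ)/2) * ((2:ℕ):ℝ)) = -1 := by norm_num
    rw [hsdef, ← Real.rpow_natCast (t ^ (-(1:ℝ)/2)) 2, ← Real.rpow_mul ht.le, he,
      Real.rpow_neg_one]
    exact inv_mul_cancel₀ ht.ne'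
  rw [div_le_iff₀ hs]
  have hsq : (t + β) ^ 2 ≤ ((1 + s) * Real.sqrt (t ^ 2 + 2 * β * t)) ^ 2 := by
    rw [mul_pow, Real.sq_sqrt hq.le]
    nlinarith [mul_nonneg hs0 (mul_nonneg hq.le hq.le), mul_nonneg hs0 hq.le,
      mul_nonneg (mul_nonneg hs0 hs0) (sq_nonneg t)]
  have h0 : (0:ℝ) ≤ (1 + s) * Real.sqrt (t ^ 2 + 2 * β * t) := by positivity
  nlinarith [sq_nonneg (t + β - (1 + s) * Real.sqrt (t ^ 2 + 2 * β * t))]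

lemma Fb_nonneg {β t : ℝ} (hβ : 0 ≤ β) (ht : 0 ≤ t) : 0 ≤ Fb β t := by
  have h1 := Jb_nonneg hβ ht
  have h2 : 0 ≤ (t + β) / Real.sqrt (t ^ 2 + 2 * β * t) := by positivity
  have := Real.exp_pos t
  rw [Fb]; positivity

lemma E1_sq_le_DD {t : ℝ} (ht : 0 < t) :
    E1 t ^ 2 * Real.exp t * (1 + t ^ (-(1:ℝ)/2)) ≤ DD t := by
  have hE0 := E1_nonneg ht.le
  rcases le_or_gt t 1 with h1 | h1
  · rw [DD, if_pos h1]
    have hE : E1 t ≤ 8 * t ^ (-(1:ℝ)/8) := E1_le_rpow ht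
    have hs1 : (1:ℝ) ≤ t ^ (-(1:ℝ)/2) :=
      Real.one_le_rpow_of_pos_of_le_one_of_nonpos ht h1 (by norm_num)
    have hs14 : (0:ℝ) ≤ t ^ (-(1:ℝ)/8) := Real.rpow_nonneg ht.le _
    have hE2 : E1 t ^ 2 ≤ 64 * t ^ (-(1:ℝ)/4) := by
      have h8 : (8 * t ^ (-(1:ℝ)/8)) ^ 2 = 64 * t ^ (-(1:ℝ)/4) := by
        rw [mul_pow, ← Real.rpow_natCast (t ^ (-(1:ℝ)/8)) 2, ← Real.rpow_mul ht.le]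
        norm_num
      nlinarith
    have het : Real.exp t ≤ Real.exp 1 := Real.exp_le_exp.2 h1
    have hss : 1 + t ^ (-(1:ℝ)/2) ≤ 2 * t ^ (-(1:ℝ)/2) := by linarith
    calc E1 t ^ 2 * Real.exp t * (1 + t ^ (-(1:ℝ)/2))
        ≤ (64 * t ^ (-(1:ℝ)/4)) * Real.exp 1 * (2 * t ^ (-(1:ℝ)/2)) := by
          refine mul_le_mul (mul_le_mul hE2 het (Real.exp_pos t).le (by positivity)) hss
            (by linarith) (by positivity)
      _ = 128 * Real.exp 1 * (t ^ (-(1:ℝ)/4) * t ^ (-(1:ℝ)/2)) := by ring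
      _ = 128 * Real.exp 1 * t ^ (-(3:ℝ)/4) := by
          rw [← Real.rpow_add ht]; norm_num
  · rw [DD, if_neg (not_le.2 h1)]
    have hE : E1 t ≤ Real.exp (-t) := by
      have := E1_le_exp ht
      have h2 : Real.exp (-t) / t ≤ Real.exp (-t) := by
        rw [div_le_iff₀ ht]
        nlinarith [Real.exp_pos (-t)]
      linarith
    have hE2 : E1 t ^ 2 ≤ Real.exp (-t) ^ 2 := by nlinarith [Real.exp_pos (-t)]
    have hs1 : t ^ (-(1:ℝ)/2) ≤ 1 := by
      refine Real.rpow_le_one_of_one_le_of_nonpos h1.le (by norm_num)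
    have hss : 1 + t ^ (-(1:ℝ)/2) ≤ 2 := by linarith
    have hs0 : (0:ℝ) ≤ 1 + t ^ (-(1:ℝ)/2) := by positivity
    calc E1 t ^ 2 * Real.exp t * (1 + t ^ (-(1:ℝ)/2))
        ≤ (Real.exp (-t) ^ 2 * Real.exp t) * 2 := by
          refine mul_le_mul (mul_le_mul_of_nonneg_right hE2 (Real.exp_pos t).le) hss hs0
            (by positivity)
      _ = 2 * Real.exp (-t) := by
          have hh : Real.exp (-t) * Real.exp t = 1 := by rw [← Real.exp_add]; simp
          linear_combination (2 * Real.exp (-t)) * hh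

lemma Fb_le_DD {β t : ℝ} (hβ : 0 < β) (hβ1 : β ≤ 1) (ht : 0 < t) : Fb β t ≤ DD t := by
  have hJ := Jb_le_E1 hβ ht
  have hJ0 := Jb_nonneg hβ.le ht.le
  have hE0 := E1_nonneg ht.le
  have hR := ratio_le hβ hβ1 ht
  have hR0 : 0 ≤ (t + β) / Real.sqrt (t ^ 2 + 2 * β * t) := by positivity
  have key : Fb β t ≤ E1 t ^ 2 * Real.exp t * (1 + t ^ (-(1:ℝ)/2)) := by
    rw [Fb]
    have h1 : Jb β t ^ 2 ≤ E1 t ^ 2 := by nlinarith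
    have e1 := (Real.exp_pos t).le
    refine mul_le_mul (mul_le_mul_of_nonneg_right h1 e1) hR hR0 (by positivity)
  exact key.trans (E1_sq_le_DD ht)
lemma E1_pos {x : ℝ} (hx : 0 < x) : 0 < E1 x := by
  rw [E1]
  refine (setIntegral_pos_iff_support_of_nonneg_ae ?_ (E1_integrand_int hx)).2 ?_
  · filter_upwards [ae_restrict_mem measurableSet_Ioi] with u hu
    have : 0 < u := hx.trans hu
    positivity
  · have hsub : Ioi x ⊆ Function.support (fun u => Real.exp (-u) * u⁻¹) ∩ Ioi x := by
      intro u hu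
      have hu0 : 0 < u := hx.trans hu
      refine ⟨?_, hu⟩
      simp only [Function.mem_support]
      positivity
    calc (0:ℝ≥0∞) < volume (Ioi x) := by rw [Real.volume_Ioi]; exact ENNReal.zero_lt_top
      _ ≤ _ := measure_mono hsub

lemma contOn_E1sq : ContinuousOn (fun x => E1 x ^ 2 * Real.exp x) (Ioi 0) :=
  ((contOn_E1.pow 2).mul Real.continuous_exp.continuousOn)

lemma A0_int : IntegrableOn (fun x => E1 x ^ 2 * Real.exp x) (Ioi 0) := by
  refine Integrable.mono DD_int (contOn_E1sq.aestronglyMeasurable measurableSet_Ioi) ?_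
  filter_upwards [ae_restrict_mem measurableSet_Ioi] with x hx
  have hx0 : (0:ℝ) < x := hx
  have h1 : E1 x ^ 2 * Real.exp x ≤ DD x := by
    refine le_trans ?_ (E1_sq_le_DD hx0)
    have hs : (0:ℝ) ≤ x ^ (-(1:ℝ)/2) := Real.rpow_nonneg hx0.le _
    have hE0 := E1_nonneg hx0.le
    nlinarith [mul_nonneg (mul_nonneg (sq_nonneg (E1 x)) (Real.exp_pos x).le) hs]
  have h0 : 0 ≤ E1 x ^ 2 * Real.exp x := by positivity
  rw [Real.norm_eq_abs, abs_of_nonneg h0, Real.norm_eq_abs]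
  exact h1.trans (le_abs_self _)

lemma A0_pos : 0 < ∫ x in Ioi (0:ℝ), E1 x ^ 2 * Real.exp x := by
  refine (setIntegral_pos_iff_support_of_nonneg_ae ?_ A0_int).2 ?_
  · filter_upwards [ae_restrict_mem measurableSet_Ioi] with x hx
    have : (0:ℝ) < x := hx
    have := E1_nonneg this.le
    positivity
  · have hsub : Ioi (0:ℝ) ⊆ Function.support (fun x => E1 x ^ 2 * Real.exp x) ∩ Ioi 0 := by
      intro x hx
      have hx0 : (0:ℝ) < x := hx
      refine ⟨?_, hx⟩
      simp only [Function.mem_support]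
      have := E1_pos hx0
      positivity
    calc (0:ℝ≥0∞) < volume (Ioi (0:ℝ)) := by rw [Real.volume_Ioi]; exact ENNReal.zero_lt_top
      _ ≤ _ := measure_mono hsub
lemma sqrt_one_add_sq_pos (y : ℝ) : 0 < Real.sqrt (1 + y ^ 2) :=
  Real.sqrt_pos.2 (by positivity)

lemma sq_sqrt_one_add_sq (y : ℝ) : Real.sqrt (1 + y ^ 2) ^ 2 = 1 + y ^ 2 :=
  Real.sq_sqrt (by positivity)

lemma one_le_sqrt_one_add_sq (y : ℝ) : 1 ≤ Real.sqrt (1 + y ^ 2) := by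
  nlinarith [sq_sqrt_one_add_sq y, Real.sqrt_nonneg (1 + y ^ 2), sq_nonneg y]

lemma self_le_sqrt_one_add_sq {y : ℝ} (hy : 0 ≤ y) : y ≤ Real.sqrt (1 + y ^ 2) := by
  nlinarith [sq_sqrt_one_add_sq y, Real.sqrt_nonneg (1 + y ^ 2)]

lemma hasDerivAt_sb (β y : ℝ) :
    HasDerivAt (fun y => β * (Real.sqrt (1 + y ^ 2) - 1))
      (β * y / Real.sqrt (1 + y ^ 2)) y := by
  have h1 : HasDerivAt (fun y : ℝ => 1 + y ^ 2) (2 * y) y := by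
    simpa using ((hasDerivAt_pow 2 y).const_add 1)
  have h2 := (Real.hasDerivAt_sqrt (by positivity : (1 + y ^ 2) ≠ 0)).comp y h1
  have h3 := (h2.sub_const 1).const_mul β
  refine h3.congr_deriv ?_
  have hc := (sqrt_one_add_sq_pos y).ne'
  field_simp

lemma cont_sb (β : ℝ) : Continuous (fun y : ℝ => β * (Real.sqrt (1 + y ^ 2) - 1)) := by
  continuity

lemma sb_nonneg {β y : ℝ} (hβ : 0 ≤ β) : 0 ≤ β * (Real.sqrt (1 + y ^ 2) - 1) := by
  have := one_le_sqrt_one_add_sq y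
  nlinarith

lemma sb_tendsto {β : ℝ} (hβ : 0 < β) :
    Tendsto (fun y : ℝ => β * (Real.sqrt (1 + y ^ 2) - 1)) atTop atTop := by
  have hev : (fun y : ℝ => β * (y - 1)) ≤ᶠ[atTop]
      (fun y : ℝ => β * (Real.sqrt (1 + y ^ 2) - 1)) := by
    filter_upwards [eventually_ge_atTop (0:ℝ)] with y hy
    have := self_le_sqrt_one_add_sq hy
    nlinarith
  have ht : Tendsto (fun y : ℝ => β * (y - 1)) atTop atTop := by
    have h0 : Tendsto (fun y : ℝ => y - 1) atTop atTop :=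
      tendsto_atTop_add_const_right _ (-1) tendsto_id
    exact h0.const_mul_atTop hβ
  exact tendsto_atTop_mono' _ hev ht

lemma inner_int {β x : ℝ} (hβ : 0 < β) (hx : 0 ≤ x) :
    IntegrableOn (fun y => y * Real.exp (β * (1 - Real.sqrt (1 + y ^ 2))) / (1 + y ^ 2))
      (Ici x) := by
  rw [integrableOn_Ici_iff_integrableOn_Ioi]
  have hmaj := (exp_neg_integrableOn_Ioi x hβ).const_mul (Real.exp β)
  refine Integrable.mono hmaj ?_ ?_
  · refine Continuous.aestronglyMeasurable ?_
    exact (continuous_id.mul (Real.continuous_exp.comp (by continuity))).div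
      (by continuity) (fun y => by positivity)
  · filter_upwards [ae_restrict_mem measurableSet_Ioi] with y hy
    have hy0 : 0 ≤ y := hx.trans (le_of_lt hy)
    have h1 : y ≤ 1 + y ^ 2 := by nlinarith [sq_nonneg (y - 1)]
    have h2 : Real.exp (β * (1 - Real.sqrt (1 + y ^ 2))) ≤ Real.exp β * Real.exp (-(β * y)) := by
      rw [← Real.exp_add]
      refine Real.exp_le_exp.2 ?_
      have := self_le_sqrt_one_add_sq hy0
      nlinarith
    have hnn : 0 ≤ y * Real.exp (β * (1 - Real.sqrt (1 + y ^ 2))) / (1 + y ^ 2) := by positivity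
    rw [Real.norm_eq_abs, abs_of_nonneg hnn, Real.norm_eq_abs, abs_of_nonneg (by positivity)]
    rw [div_le_iff₀ (by positivity : (0:ℝ) < 1 + y ^ 2)]
    calc y * Real.exp (β * (1 - Real.sqrt (1 + y ^ 2)))
        ≤ (1 + y ^ 2) * (Real.exp β * Real.exp (-(β * y))) := by
          refine mul_le_mul h1 h2 (Real.exp_pos _).le (by positivity)
      _ = Real.exp β * Real.exp (-(β * y)) * (1 + y ^ 2) := by ring
      _ = Real.exp β * Real.exp (-β * y) * (1 + y ^ 2) := by rw [neg_mul]

lemma inner_sub {β x : ℝ} (hβ : 0 < β) (hx : 0 ≤ x) :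
    (∫ y in Ioi x, y * Real.exp (β * (1 - Real.sqrt (1 + y ^ 2))) / (1 + y ^ 2))
      = Jb β (β * (Real.sqrt (1 + x ^ 2) - 1)) := by
  set f := fun y : ℝ => β * (Real.sqrt (1 + y ^ 2) - 1) with hf
  set f' := fun y : ℝ => β * y / Real.sqrt (1 + y ^ 2) with hf'
  set g := fun u : ℝ => Real.exp (-u) * (u + β)⁻¹ with hg
  have himg : ∀ y : ℝ, 0 ≤ f y := fun y => sb_nonneg hβ.le
  have heq : ∀ y : ℝ, (g ∘ f) y * f' y
      = y * Real.exp (β * (1 - Real.sqrt (1 + y ^ 2))) / (1 + y ^ 2) := by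
    intro y
    have hc := sqrt_one_add_sq_pos y
    have hsq := sq_sqrt_one_add_sq y
    simp only [hg, hf, hf', Function.comp]
    have h1 : β * (Real.sqrt (1 + y ^ 2) - 1) + β = β * Real.sqrt (1 + y ^ 2) := by ring
    rw [h1]
    have h2 : -(β * (Real.sqrt (1 + y ^ 2) - 1)) = β * (1 - Real.sqrt (1 + y ^ 2)) := by ring
    rw [h2]
    field_simp
    linear_combination (-y) * hsq
  have key := integral_comp_mul_deriv_Ioi (f := f) (f' := f') (g := g) (a := x)
    (cont_sb β).continuousOn (sb_tendsto hβ)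
    (fun y _ => (hasDerivAt_sb β y).hasDerivWithinAt)
    ?_ ?_ ?_
  · have hJ : Jb β (β * (Real.sqrt (1 + x ^ 2) - 1)) = ∫ u in Ioi (f x), g u := rfl
    rw [hJ, ← key]
    exact setIntegral_congr_fun measurableSet_Ioi (fun y _ => (heq y).symm)
  · -- continuity of g on image
    refine ContinuousOn.mono (s := Ici (0:ℝ)) ?_
      (by rintro u ⟨y, _, rfl⟩; exact mem_Ici.2 (himg y))
    refine ContinuousOn.mul (Real.continuous_exp.comp continuous_neg).continuousOn ?_
    refine ContinuousOn.inv₀ (by fun_prop) (fun u hu => ?_)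
    have : (0:ℝ) ≤ u := hu
    positivity
  · refine IntegrableOn.mono_set (t := Ici (0:ℝ)) ?_
      (by rintro u ⟨y, _, rfl⟩; exact mem_Ici.2 (himg y))
    rw [integrableOn_Ici_iff_integrableOn_Ioi]
    exact Jb_integrand_int hβ le_rfl
  · refine ((inner_int hβ hx).congr_fun (fun y _ => (heq y).symm) measurableSet_Ici)
lemma contOn_Jb_comp {β : ℝ} (hβ : 0 < β) :
    ContinuousOn (fun x => Jb β (β * (Real.sqrt (1 + x ^ 2) - 1))) (Ioi 0) := by
  refine (contOn_Jb hβ).comp (cont_sb β).continuousOn (fun x _ => ?_)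
  exact mem_Ici.2 (sb_nonneg hβ.le)

lemma outer_int {β : ℝ} (hβ : 0 < β) :
    IntegrableOn (fun x => Jb β (β * (Real.sqrt (1 + x ^ 2) - 1)) ^ 2
      * Real.exp (β * (Real.sqrt (1 + x ^ 2) - 1))) (Ioi 0) := by
  have hmaj := (exp_neg_integrableOn_Ioi 0 hβ).const_mul (Real.exp β / β ^ 2)
  refine Integrable.mono hmaj ?_ ?_
  · exact (((contOn_Jb_comp hβ).pow 2).mul
      (Real.continuous_exp.comp (cont_sb β)).continuousOn).aestronglyMeasurable
      measurableSet_Ioi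
  · filter_upwards [ae_restrict_mem measurableSet_Ioi] with x hx
    have hx0 : (0:ℝ) < x := hx
    set t := β * (Real.sqrt (1 + x ^ 2) - 1) with htdef
    have ht0 : 0 ≤ t := sb_nonneg hβ.le
    have hJ := Jb_le_exp hβ ht0
    have hJ0 := Jb_nonneg hβ.le ht0
    have hee : Real.exp (-t) * Real.exp t = 1 := by rw [← Real.exp_add]; simp
    have h1 : Jb β t ^ 2 * Real.exp t ≤ (Real.exp (-t) / β) ^ 2 * Real.exp t := by
      have h' : Jb β t ^ 2 ≤ (Real.exp (-t) / β) ^ 2 := by nlinarith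
      exact mul_le_mul_of_nonneg_right h' (Real.exp_pos t).le
    have h2 : (Real.exp (-t) / β) ^ 2 * Real.exp t = Real.exp (-t) / β ^ 2 := by
      field_simp
      linear_combination hee
    have h3 : Real.exp (-t) ≤ Real.exp β * Real.exp (-(β * x)) := by
      rw [← Real.exp_add]
      refine Real.exp_le_exp.2 ?_
      have := self_le_sqrt_one_add_sq hx0.le
      rw [htdef]
      nlinarith
    rw [Real.norm_eq_abs, abs_of_nonneg (by positivity), Real.norm_eq_abs,
      abs_of_nonneg (by positivity)]
    calc Jb β t ^ 2 * Real.exp t ≤ Real.exp (-t) / β ^ 2 := by rw [← h2]; exact h1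
      _ ≤ (Real.exp β * Real.exp (-(β * x))) / β ^ 2 := by
          exact div_le_div_of_nonneg_right h3 (by positivity) |>.trans_eq rfl
      _ = Real.exp β / β ^ 2 * Real.exp (-β * x) := by rw [neg_mul]; ring

lemma contOn_Fb {β : ℝ} (hβ : 0 < β) : ContinuousOn (Fb β) (Ioi 0) := by
  have h1 : ContinuousOn (fun t : ℝ => Jb β t ^ 2 * Real.exp t) (Ioi 0) :=
    (((contOn_Jb hβ).mono Ioi_subset_Ici_self).pow 2).mul Real.continuous_exp.continuousOn
  refine h1.mul (ContinuousOn.div (by fun_prop) ?_ (fun t ht => ?_))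
  · exact (Real.continuous_sqrt.comp (by continuity)).continuousOn
  · have ht0 : (0:ℝ) < t := ht
    have : 0 < t ^ 2 + 2 * β * t := by nlinarith
    exact ne_of_gt (Real.sqrt_pos.2 this)

lemma Fb_int {β : ℝ} (hβ : 0 < β) (hβ1 : β ≤ 1) : IntegrableOn (Fb β) (Ici 0) := by
  rw [integrableOn_Ici_iff_integrableOn_Ioi]
  refine Integrable.mono DD_int ((contOn_Fb hβ).aestronglyMeasurable measurableSet_Ioi) ?_
  filter_upwards [ae_restrict_mem measurableSet_Ioi] with t ht
  have ht0 : (0:ℝ) < t := ht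
  rw [Real.norm_eq_abs, abs_of_nonneg (Fb_nonneg hβ.le ht0.le), Real.norm_eq_abs]
  exact (Fb_le_DD hβ hβ1 ht0).trans (le_abs_self _)

lemma one_lt_sqrt_one_add_sq {x : ℝ} (hx : 0 < x) : 1 < Real.sqrt (1 + x ^ 2) := by
  nlinarith [sq_sqrt_one_add_sq x, Real.sqrt_nonneg (1 + x ^ 2)]

lemma outer_sub {β : ℝ} (hβ : 0 < β) (hβ1 : β ≤ 1) :
    ∫ t in Ioi (0:ℝ), Fb β t
      = β * ∫ x in Ioi (0:ℝ), Jb β (β * (Real.sqrt (1 + x ^ 2) - 1)) ^ 2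
          * Real.exp (β * (Real.sqrt (1 + x ^ 2) - 1)) := by
  set f := fun y : ℝ => β * (Real.sqrt (1 + y ^ 2) - 1) with hfdef
  set f' := fun y : ℝ => β * y / Real.sqrt (1 + y ^ 2) with hf'def
  have himg : ∀ y : ℝ, 0 ≤ f y := fun y => sb_nonneg hβ.le
  have himg' : ∀ y ∈ Ioi (0:ℝ), f y ∈ Ioi (0:ℝ) := by
    intro y hy
    have : (0:ℝ) < y := hy
    have := one_lt_sqrt_one_add_sq this
    have : 0 < f y := by rw [hfdef]; dsimp only; nlinarith
    exact this
  have heq : ∀ x ∈ Ioi (0:ℝ), (Fb β ∘ f) x * f' x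
      = β * (Jb β (f x) ^ 2 * Real.exp (f x)) := by
    intro x hx
    have hx0 : (0:ℝ) < x := hx
    have hs := sqrt_one_add_sq_pos x
    have hsq := sq_sqrt_one_add_sq x
    have harg : f x ^ 2 + 2 * β * f x = (β * x) ^ 2 := by
      rw [hfdef]; dsimp only; linear_combination β ^ 2 * hsq
    have hsqrt : Real.sqrt (f x ^ 2 + 2 * β * f x) = β * x := by
      rw [harg, Real.sqrt_sq (by positivity)]
    simp only [Function.comp, Fb]
    rw [hsqrt]
    have hfb : f x + β = β * Real.sqrt (1 + x ^ 2) := by rw [hfdef]; dsimp only; ring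
    rw [hfb, hf'def]
    dsimp only
    field_simp
  have key := integral_comp_mul_deriv_Ioi (f := f) (f' := f') (g := Fb β) (a := 0)
    (cont_sb β).continuousOn (sb_tendsto hβ)
    (fun y _ => (hasDerivAt_sb β y).hasDerivWithinAt)
    ((contOn_Fb hβ).mono (by rintro u ⟨y, hy, rfl⟩; exact himg' y hy))
    ((Fb_int hβ hβ1).mono_set (by rintro u ⟨y, _, rfl⟩; exact mem_Ici.2 (himg y)))
    ?_
  · have hf0 : f 0 = 0 := by
      rw [hfdef]; norm_num
    rw [hf0] at key
    rw [← key]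
    rw [show (∫ x in Ioi (0:ℝ), (Fb β ∘ f) x * f' x)
        = ∫ x in Ioi (0:ℝ), β * (Jb β (f x) ^ 2 * Real.exp (f x)) from
      setIntegral_congr_fun measurableSet_Ioi (fun x hx => heq x hx)]
    rw [MeasureTheory.integral_const_mul]
  · rw [integrableOn_Ici_iff_integrableOn_Ioi]
    exact IntegrableOn.congr_fun ((outer_int hβ).const_mul β) (fun x hx => (heq x hx).symm) measurableSet_Ioi
lemma Jb_tendsto {t : ℝ} (ht : 0 < t) :
    Tendsto (fun β => Jb β t) (nhdsWithin 0 (Ioi 0)) (nhds (E1 t)) := by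
  refine tendsto_integral_filter_of_dominated_convergence (μ := volume.restrict (Ioi t))
    (F := fun β u => Real.exp (-u) * (u + β)⁻¹) (f := fun u => Real.exp (-u) * u⁻¹)
    (fun u => Real.exp (-u) * u⁻¹) ?_ ?_ (E1_integrand_int ht) ?_
  · refine Eventually.of_forall (fun β => ?_)
    exact ((Real.measurable_exp.comp measurable_neg).mul
      ((measurable_id.add_const β).inv)).aestronglyMeasurable
  · filter_upwards [self_mem_nhdsWithin] with β hβ
    have hβ0 : (0:ℝ) < β := hβ
    filter_upwards [ae_restrict_mem measurableSet_Ioi] with u hu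
    have hu0 : 0 < u := ht.trans hu
    rw [Real.norm_eq_abs, abs_of_nonneg (by positivity)]
    exact mul_le_mul_of_nonneg_left (inv_anti₀ hu0 (by linarith)) (Real.exp_pos _).le
  · filter_upwards [ae_restrict_mem measurableSet_Ioi] with u hu
    have hu0 : 0 < u := ht.trans hu
    have hc : ContinuousAt (fun β : ℝ => Real.exp (-u) * (u + β)⁻¹) 0 := by
      refine continuousAt_const.mul (ContinuousAt.inv₀ (by fun_prop) ?_)
      simpa using hu0.ne'
    have := hc.tendsto.mono_left (nhdsWithin_le_nhds (s := Ioi (0:ℝ)))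
    simpa using this

lemma ratio_tendsto {t : ℝ} (ht : 0 < t) :
    Tendsto (fun β : ℝ => (t + β) / Real.sqrt (t ^ 2 + 2 * β * t))
      (nhdsWithin 0 (Ioi 0)) (nhds 1) := by
  have hval : Real.sqrt (t ^ 2 + 2 * 0 * t) = t := by
    rw [show t ^ 2 + 2 * 0 * t = t ^ 2 by ring, Real.sqrt_sq ht.le]
  have hc : ContinuousAt (fun β : ℝ => (t + β) / Real.sqrt (t ^ 2 + 2 * β * t)) 0 := by
    refine ContinuousAt.div (by fun_prop) ?_ ?_
    · exact Real.continuous_sqrt.continuousAt.comp (by fun_prop)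
    · rw [hval]; exact ht.ne'
  have h2 := hc.tendsto.mono_left (nhdsWithin_le_nhds (s := Ioi (0:ℝ)))
  have hv : (t + 0) / Real.sqrt (t ^ 2 + 2 * 0 * t) = 1 := by
    rw [hval, add_zero, div_self ht.ne']
  rwa [hv] at h2

lemma Fb_tendsto {t : ℝ} (ht : 0 < t) :
    Tendsto (fun β => Fb β t) (nhdsWithin 0 (Ioi 0))
      (nhds (E1 t ^ 2 * Real.exp t)) := by
  have h1 : Tendsto (fun β => Jb β t ^ 2 * Real.exp t) (nhdsWithin 0 (Ioi 0))
      (nhds (E1 t ^ 2 * Real.exp t)) := ((Jb_tendsto ht).pow 2).mul tendsto_const_nhds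
  have := h1.mul (ratio_tendsto ht)
  rw [mul_one] at this
  exact this

lemma Ioo_mem_l : Ioo (0:ℝ) 1 ∈ nhdsWithin (0:ℝ) (Ioi 0) := by
  rw [show Ioo (0:ℝ) 1 = Iio 1 ∩ Ioi 0 by ext x; simp [mem_Ioo, and_comm]]
  exact inter_mem (nhdsWithin_le_nhds (Iio_mem_nhds one_pos)) self_mem_nhdsWithin

lemma main_tendsto :
    Tendsto (fun β => ∫ t in Ioi (0:ℝ), Fb β t) (nhdsWithin 0 (Ioi 0))
      (nhds (∫ x in Ioi (0:ℝ), E1 x ^ 2 * Real.exp x)) := by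
  refine tendsto_integral_filter_of_dominated_convergence (μ := volume.restrict (Ioi 0))
    DD ?_ ?_ DD_int ?_
  · filter_upwards [self_mem_nhdsWithin] with β hβ
    exact (contOn_Fb hβ).aestronglyMeasurable measurableSet_Ioi
  · filter_upwards [Ioo_mem_l] with β hβ
    filter_upwards [ae_restrict_mem measurableSet_Ioi] with t htm
    have ht0 : (0:ℝ) < t := htm
    rw [Real.norm_eq_abs, abs_of_nonneg (Fb_nonneg hβ.1.le ht0.le)]
    exact Fb_le_DD hβ.1 hβ.2.le ht0
  · filter_upwards [ae_restrict_mem measurableSet_Ioi] with t htm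
    exact Fb_tendsto htm

/-- As β → 0⁺, K_β → 2 A₀, where A₀ = ∫₀^∞ (∫_x^∞ e^{−u} u⁻¹ du)² eˣ dx is a finite
positive constant. -/
theorem stmt16 :
    0 < ∫ x in Ioi (0:ℝ), (∫ u in Ioi x, Real.exp (-u) * u⁻¹) ^ 2 * Real.exp x ∧
    IntegrableOn (fun x => (∫ u in Ioi x, Real.exp (-u) * u⁻¹) ^ 2 * Real.exp x) (Ioi 0) ∧
    Tendsto (fun β : ℝ =>
        2 * β * ∫ x in Ioi (0:ℝ),
          (∫ y in Ioi x, y * Real.exp (β * (1 - Real.sqrt (1 + y ^ 2))) / (1 + y ^ 2)) ^ 2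
            * Real.exp (β * (Real.sqrt (1 + x ^ 2) - 1)))
      (nhdsWithin 0 (Ioi 0))
      (nhds (2 * ∫ x in Ioi (0:ℝ), (∫ u in Ioi x, Real.exp (-u) * u⁻¹) ^ 2 * Real.exp x)) := by
  refine ⟨A0_pos, A0_int, ?_⟩
  have hev : (fun β : ℝ => 2 * ∫ t in Ioi (0:ℝ), Fb β t)
      =ᶠ[nhdsWithin (0:ℝ) (Ioi 0)] (fun β : ℝ =>
        2 * β * ∫ x in Ioi (0:ℝ),
          (∫ y in Ioi x, y * Real.exp (β * (1 - Real.sqrt (1 + y ^ 2))) / (1 + y ^ 2)) ^ 2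
            * Real.exp (β * (Real.sqrt (1 + x ^ 2) - 1))) := by
    filter_upwards [Ioo_mem_l] with β hβ
    have h1 : ∫ x in Ioi (0:ℝ),
          (∫ y in Ioi x, y * Real.exp (β * (1 - Real.sqrt (1 + y ^ 2))) / (1 + y ^ 2)) ^ 2
            * Real.exp (β * (Real.sqrt (1 + x ^ 2) - 1))
        = ∫ x in Ioi (0:ℝ), Jb β (β * (Real.sqrt (1 + x ^ 2) - 1)) ^ 2
            * Real.exp (β * (Real.sqrt (1 + x ^ 2) - 1)) := by
      refine setIntegral_congr_fun measurableSet_Ioi (fun x hx => ?_)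
      have hx0 : (0:ℝ) < x := hx
      rw [inner_sub hβ.1 hx0.le]
    rw [h1, outer_sub hβ.1 hβ.2.le]
    ring
  have hlim := main_tendsto.const_mul (2:ℝ)
  exact hlim.congr' hev
end

section
/- As β → ∞, the limiting variance of the one-dimensional Dunkel–Hänggi relativistic diffusion satisfies Σ_β² ∼ 2/β; that is, lim_{β→∞} β · K_β / J_β = 2. -/
open Filter MeasureTheory Set

private lemma s_pos (x : ℝ) : 0 < Real.sqrt (1 + x ^ 2) :=
  Real.sqrt_pos.2 (by positivity)

private lemma sq_s (x : ℝ) : Real.sqrt (1 + x ^ 2) ^ 2 = 1 + x ^ 2 :=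
  Real.sq_sqrt (by positivity)

private lemma one_le_s (x : ℝ) : 1 ≤ Real.sqrt (1 + x ^ 2) := by
  nlinarith [sq_s x, Real.sqrt_nonneg (1 + x ^ 2)]

private lemma self_le_s (x : ℝ) : x ≤ Real.sqrt (1 + x ^ 2) := by
  calc x ≤ |x| := le_abs_self x
  _ = Real.sqrt (x ^ 2) := (Real.sqrt_sq_eq_abs x).symm
  _ ≤ _ := Real.sqrt_le_sqrt (by nlinarith)

private lemma exp_term_le {β : ℝ} (hβ : 0 ≤ β) (x : ℝ) :
    Real.exp (β * (1 - Real.sqrt (1 + x ^ 2))) ≤ Real.exp β * Real.exp (-β * x) := by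
  rw [← Real.exp_add]
  apply Real.exp_le_exp.2
  nlinarith [mul_le_mul_of_nonneg_left (self_le_s x) hβ]

private lemma hasDerivAt_s (y : ℝ) :
    HasDerivAt (fun y : ℝ => Real.sqrt (1 + y ^ 2)) (y / Real.sqrt (1 + y ^ 2)) y := by
  have h1 : HasDerivAt (fun y : ℝ => 1 + y ^ 2) (2 * y) y := by
    simpa using (hasDerivAt_pow 2 y).const_add 1
  have h2 := (Real.hasDerivAt_sqrt (show (1 + y ^ 2 : ℝ) ≠ 0 by positivity)).comp y h1
  exact h2.congr_deriv (by ring)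

private lemma tendsto_s : Tendsto (fun y : ℝ => Real.sqrt (1 + y ^ 2)) atTop atTop :=
  tendsto_atTop_mono self_le_s tendsto_id

/-- FTC workhorse: `∫_{x}^∞ (y/√(1+y²)) e^{A - k√(1+y²)} dy = e^{A-k√(1+x²)}/k`. -/
private lemma ftc_exp {x A k : ℝ} (hk : 0 < k) (hx : 0 ≤ x) :
    (∫ y in Ioi x, (y / Real.sqrt (1 + y ^ 2)) * Real.exp (A - k * Real.sqrt (1 + y ^ 2)))
      = Real.exp (A - k * Real.sqrt (1 + x ^ 2)) / k ∧
    IntegrableOn (fun y => (y / Real.sqrt (1 + y ^ 2)) * Real.exp (A - k * Real.sqrt (1 + y ^ 2)))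
      (Ioi x) := by
  set g' : ℝ → ℝ := fun y => (y / Real.sqrt (1 + y ^ 2)) * Real.exp (A - k * Real.sqrt (1 + y ^ 2))
  set g : ℝ → ℝ := fun y => -Real.exp (A - k * Real.sqrt (1 + y ^ 2)) / k
  have hderiv : ∀ y ∈ Ici x, HasDerivAt g (g' y) y := by
    intro y _
    have h1 : HasDerivAt (fun y : ℝ => A - k * Real.sqrt (1 + y ^ 2))
        (-(k * (y / Real.sqrt (1 + y ^ 2)))) y := by
      exact ((hasDerivAt_s y).const_mul k).const_sub A
    have h2 := (h1.exp.div_const k).neg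
    have h3 : -(Real.exp (A - k * Real.sqrt (1 + y ^ 2)) * -(k * (y / Real.sqrt (1 + y ^ 2))) / k)
        = (y / Real.sqrt (1 + y ^ 2)) * Real.exp (A - k * Real.sqrt (1 + y ^ 2)) * (k * k⁻¹) := by
      ring
    have e1 : g = -fun x => Real.exp (A - k * Real.sqrt (1 + x ^ 2)) / k := by
      funext z; simp [g, neg_div]
    have e2 : g' y = -(Real.exp (A - k * Real.sqrt (1 + y ^ 2)) * -(k * (y / Real.sqrt (1 + y ^ 2))) / k) := by
      rw [h3, mul_inv_cancel₀ hk.ne', mul_one]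
    rw [e1, e2]; exact h2
  have hpos : ∀ y ∈ Ioi x, 0 ≤ g' y := by
    intro y hy
    have hy0 : 0 < y := lt_of_le_of_lt hx hy
    have := (s_pos y).le
    positivity
  have hlim : Tendsto g atTop (nhds 0) := by
    have h1 : Tendsto (fun y : ℝ => A - k * Real.sqrt (1 + y ^ 2)) atTop atBot := by
      apply tendsto_atBot_add_const_left _ A
      exact tendsto_neg_atTop_atBot.comp (tendsto_s.const_mul_atTop hk)
    have h2 := (Real.tendsto_exp_atBot.comp h1).neg.div_const k
    simpa using h2
  have hint := integrableOn_Ioi_deriv_of_nonneg' hderiv hpos hlim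
  have heq := integral_Ioi_of_hasDerivAt_of_nonneg' hderiv hpos hlim
  refine ⟨?_, hint⟩
  rw [heq]
  simp [g, neg_div]

private lemma cont_inner (β : ℝ) :
    Continuous (fun y : ℝ => y * Real.exp (β * (1 - Real.sqrt (1 + y ^ 2))) / (1 + y ^ 2)) := by
  apply Continuous.div
  · exact continuous_id.mul (Real.continuous_exp.comp (by continuity))
  · continuity
  · intro y; positivity

private lemma int_gu {β x : ℝ} (hβ : 0 < β) (hx : 0 ≤ x) :
    (∫ y in Ioi x, (y / Real.sqrt (1 + y ^ 2)) * Real.exp (β * (1 - Real.sqrt (1 + y ^ 2))))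
      = Real.exp (β * (1 - Real.sqrt (1 + x ^ 2))) / β ∧
    IntegrableOn (fun y => (y / Real.sqrt (1 + y ^ 2)) * Real.exp (β * (1 - Real.sqrt (1 + y ^ 2))))
      (Ioi x) := by
  have h := ftc_exp (x := x) (A := β) (k := β) hβ hx
  have e : ∀ u : ℝ, β - β * u = β * (1 - u) := fun u => by ring
  simp_rw [e] at h
  exact h

private lemma integrableOn_inner {β x : ℝ} (hβ : 0 < β) (hx : 0 ≤ x) :
    IntegrableOn (fun y => y * Real.exp (β * (1 - Real.sqrt (1 + y ^ 2))) / (1 + y ^ 2))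
      (Ioi x) := by
  refine Integrable.mono' (int_gu hβ hx).2 ((cont_inner β).aestronglyMeasurable) ?_
  filter_upwards [ae_restrict_mem measurableSet_Ioi] with y hy
  have hy0 : 0 < y := lt_of_le_of_lt hx hy
  have hs := s_pos y
  have hs1 := one_le_s y
  have hsq := sq_s y
  rw [Real.norm_eq_abs, abs_of_nonneg (by positivity)]
  have hrw : y * Real.exp (β * (1 - Real.sqrt (1 + y ^ 2))) / (1 + y ^ 2)
      = (y * Real.exp (β * (1 - Real.sqrt (1 + y ^ 2)))) / (1 + y ^ 2) := by ring
  have hrw2 : (y / Real.sqrt (1 + y ^ 2)) * Real.exp (β * (1 - Real.sqrt (1 + y ^ 2)))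
      = (y * Real.exp (β * (1 - Real.sqrt (1 + y ^ 2)))) / Real.sqrt (1 + y ^ 2) := by ring
  rw [hrw, hrw2]
  gcongr
  nlinarith

private lemma I_le {β x : ℝ} (hβ : 0 < β) (hx : 0 ≤ x) :
    (∫ y in Ioi x, y * Real.exp (β * (1 - Real.sqrt (1 + y ^ 2))) / (1 + y ^ 2))
      ≤ Real.exp (β * (1 - Real.sqrt (1 + x ^ 2))) / (β * Real.sqrt (1 + x ^ 2)) := by
  have hs : 0 < Real.sqrt (1 + x ^ 2) := s_pos x
  set s : ℝ := Real.sqrt (1 + x ^ 2) with hsdef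
  have hmono : (∫ y in Ioi x, y * Real.exp (β * (1 - Real.sqrt (1 + y ^ 2))) / (1 + y ^ 2))
      ≤ ∫ y in Ioi x, (1 / s) * ((y / Real.sqrt (1 + y ^ 2))
          * Real.exp (β * (1 - Real.sqrt (1 + y ^ 2)))) := by
    apply integral_mono_of_nonneg
    · filter_upwards [ae_restrict_mem measurableSet_Ioi] with y hy
      have hy0 : 0 < y := lt_of_le_of_lt hx hy
      positivity
    · exact ((int_gu hβ hx).2.const_mul (1 / s))
    · filter_upwards [ae_restrict_mem measurableSet_Ioi] with y hy
      have hy0 : 0 < y := lt_of_le_of_lt hx hy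
      have hu : 0 < Real.sqrt (1 + y ^ 2) := s_pos y
      have hsu : s ≤ Real.sqrt (1 + y ^ 2) := by
        rw [hsdef]
        exact Real.sqrt_le_sqrt (by nlinarith [mem_Ioi.1 hy])
      have hsq := sq_s y
      have hrw : (1 / s) * ((y / Real.sqrt (1 + y ^ 2))
          * Real.exp (β * (1 - Real.sqrt (1 + y ^ 2))))
          = (y * Real.exp (β * (1 - Real.sqrt (1 + y ^ 2)))) / (Real.sqrt (1 + y ^ 2) * s) := by
        field_simp
      rw [hrw, show y * Real.exp (β * (1 - Real.sqrt (1 + y ^ 2))) / (1 + y ^ 2)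
          = (y * Real.exp (β * (1 - Real.sqrt (1 + y ^ 2)))) / (1 + y ^ 2) from by ring]
      gcongr
      nlinarith
  calc _ ≤ _ := hmono
  _ = (1 / s) * (Real.exp (β * (1 - s)) / β) := by
      rw [integral_const_mul, (int_gu hβ hx).1]
  _ = Real.exp (β * (1 - s)) / (β * s) := by
      field_simp

private lemma I_ge {β x : ℝ} (hβ : 0 < β) (hx : 0 ≤ x) :
    Real.exp (β * (1 - Real.sqrt (1 + x ^ 2))) / (β * Real.sqrt (1 + x ^ 2) + 1)
      ≤ ∫ y in Ioi x, y * Real.exp (β * (1 - Real.sqrt (1 + y ^ 2))) / (1 + y ^ 2) := by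
  have hs : 0 < Real.sqrt (1 + x ^ 2) := s_pos x
  set s : ℝ := Real.sqrt (1 + x ^ 2) with hsdef
  set c : ℝ := β + 1 / s with hcdef
  have hc : 0 < c := by positivity
  set A : ℝ := β * (1 - s) + c * s with hAdef
  have h := ftc_exp (x := x) (A := A) (k := c) hc hx
  have hAs : A - c * s = β * (1 - s) := by rw [hAdef]; ring
  have hmono : (∫ y in Ioi x, (1 / s) * ((y / Real.sqrt (1 + y ^ 2))
        * Real.exp (A - c * Real.sqrt (1 + y ^ 2))))
      ≤ ∫ y in Ioi x, y * Real.exp (β * (1 - Real.sqrt (1 + y ^ 2))) / (1 + y ^ 2) := by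
    apply integral_mono_of_nonneg
    · filter_upwards [ae_restrict_mem measurableSet_Ioi] with y hy
      have hy0 : 0 < y := lt_of_le_of_lt hx hy
      positivity
    · exact integrableOn_inner hβ hx
    · filter_upwards [ae_restrict_mem measurableSet_Ioi] with y hy
      have hy0 : 0 < y := lt_of_le_of_lt hx hy
      have hu : 0 < Real.sqrt (1 + y ^ 2) := s_pos y
      set u : ℝ := Real.sqrt (1 + y ^ 2) with hudef
      have hsu : s ≤ u := by rw [hsdef, hudef]; exact Real.sqrt_le_sqrt (by nlinarith [mem_Ioi.1 hy])
      have hsq : u ^ 2 = 1 + y ^ 2 := sq_s y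
      have hsplit : A - c * u = β * (1 - u) + (-((u - s) / s)) := by
        rw [hAdef, hcdef]; field_simp; ring
      have hexp : Real.exp (-((u - s) / s)) ≤ s / u := by
        have h1 : u / s ≤ Real.exp ((u - s) / s) := by
          have := Real.add_one_le_exp ((u - s) / s)
          have h2 : (u - s) / s + 1 = u / s := by field_simp; ring
          linarith [h2 ▸ this]
        rw [Real.exp_neg]
        calc (Real.exp ((u - s) / s))⁻¹ ≤ (u / s)⁻¹ := by
              apply inv_anti₀ (by positivity) h1
        _ = s / u := by rw [inv_div]
      calc (1 / s) * ((y / u) * Real.exp (A - c * u))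
          = (y / (s * u)) * Real.exp (β * (1 - u)) * Real.exp (-((u - s) / s)) := by
            rw [hsplit, Real.exp_add]; ring
      _ ≤ (y / (s * u)) * Real.exp (β * (1 - u)) * (s / u) := by
            apply mul_le_mul_of_nonneg_left hexp (by positivity)
      _ = y * Real.exp (β * (1 - u)) / (1 + y ^ 2) := by
            rw [← hsq]; field_simp
  calc Real.exp (β * (1 - s)) / (β * s + 1)
      = (1 / s) * (Real.exp (A - c * s) / c) := by
        rw [hAs, hcdef]; field_simp
  _ = ∫ y in Ioi x, (1 / s) * ((y / Real.sqrt (1 + y ^ 2))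
        * Real.exp (A - c * Real.sqrt (1 + y ^ 2))) := by
        rw [integral_const_mul, h.1]
  _ ≤ _ := hmono

private lemma key_id {a : ℝ} (ha : 0 ≤ a) (β : ℝ) :
    β * (1 - Real.sqrt (1 + a)) = -(β * a / (Real.sqrt (1 + a) + 1)) := by
  have h1 : (0:ℝ) < Real.sqrt (1 + a) + 1 := by positivity
  have h2 : Real.sqrt (1 + a) ^ 2 = 1 + a := Real.sq_sqrt (by linarith)
  rw [show -(β * a / (Real.sqrt (1 + a) + 1)) = (-(β * a)) / (Real.sqrt (1 + a) + 1) from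
    (neg_div _ _).symm, eq_div_iff h1.ne']
  linear_combination (-β) * h2

private lemma laplace (h : ℝ → ℝ → ℝ)
    (hmeas : ∀ β : ℝ, 1 ≤ β → Measurable (h β))
    (h0 : ∀ β : ℝ, 1 ≤ β → ∀ x : ℝ, 0 < x → h β x ∈ Icc (0:ℝ) 1)
    (hlim : ∀ t : ℝ, 0 < t → Tendsto (fun β : ℝ => h β (1 / Real.sqrt β * t)) atTop (nhds 1)) :
    Tendsto (fun β : ℝ => Real.sqrt β
        * ∫ x in Ioi (0:ℝ), Real.exp (β * (1 - Real.sqrt (1 + x ^ 2))) * h β x)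
      atTop (nhds (Real.sqrt (Real.pi / (1/2)) / 2)) := by
  have key : Tendsto (fun β : ℝ => ∫ t in Ioi (0:ℝ),
      Real.exp (β * (1 - Real.sqrt (1 + (1 / Real.sqrt β * t) ^ 2))) * h β (1 / Real.sqrt β * t))
      atTop (nhds (∫ t in Ioi (0:ℝ), Real.exp (-(1/2) * t ^ 2))) := by
    apply tendsto_integral_filter_of_dominated_convergence
      (bound := fun t => Real.exp (-(t ^ 2 / (Real.sqrt (1 + t ^ 2) + 1))))
    · filter_upwards [eventually_ge_atTop (1:ℝ)] with β hβ
      have m1 : Measurable fun t : ℝ =>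
          Real.exp (β * (1 - Real.sqrt (1 + (1 / Real.sqrt β * t) ^ 2))) := by
        fun_prop
      exact (m1.mul ((hmeas β hβ).comp (measurable_id.const_mul _))).aestronglyMeasurable
    · filter_upwards [eventually_ge_atTop (1:ℝ)] with β hβ
      filter_upwards [ae_restrict_mem measurableSet_Ioi] with t ht
      have ht0 : 0 < t := mem_Ioi.1 ht
      have hβ0 : (0:ℝ) < β := lt_of_lt_of_le one_pos hβ
      have hsβ : 0 < Real.sqrt β := Real.sqrt_pos.2 hβ0
      have hx : 0 < 1 / Real.sqrt β * t := by positivity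
      obtain ⟨hh0, hh1⟩ := h0 β hβ _ hx
      have ha : (1 / Real.sqrt β * t) ^ 2 = t ^ 2 / β := by
        rw [mul_pow, div_pow, one_pow, Real.sq_sqrt hβ0.le]; ring
      have hβa : β * (t ^ 2 / β) = t ^ 2 := by field_simp
      have hexp_le : β * (1 - Real.sqrt (1 + (1 / Real.sqrt β * t) ^ 2))
          ≤ -(t ^ 2 / (Real.sqrt (1 + t ^ 2) + 1)) := by
        rw [ha, key_id (by positivity) β, hβa]
        apply neg_le_neg
        gcongr
        exact div_le_self (sq_nonneg t) hβ
      rw [norm_mul, Real.norm_eq_abs, Real.norm_eq_abs, Real.abs_exp, abs_of_nonneg hh0]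
      calc Real.exp (β * (1 - Real.sqrt (1 + (1 / Real.sqrt β * t) ^ 2))) * h β (1 / Real.sqrt β * t)
          ≤ Real.exp (β * (1 - Real.sqrt (1 + (1 / Real.sqrt β * t) ^ 2))) * 1 :=
            mul_le_mul_of_nonneg_left hh1 (Real.exp_nonneg _)
      _ ≤ Real.exp (-(t ^ 2 / (Real.sqrt (1 + t ^ 2) + 1))) := by
            rw [mul_one]; exact Real.exp_le_exp.2 hexp_le
    · have contD : Continuous fun t : ℝ => Real.exp (-(t ^ 2 / (Real.sqrt (1 + t ^ 2) + 1))) := by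
        apply Real.continuous_exp.comp
        apply Continuous.neg
        apply Continuous.div (continuous_pow 2) (by continuity)
        intro t; positivity
      refine Integrable.mono' ((exp_neg_integrableOn_Ioi 0 one_pos).const_mul (Real.exp 2))
        contD.aestronglyMeasurable ?_
      filter_upwards [ae_restrict_mem measurableSet_Ioi] with t ht
      have ht0 : 0 < t := mem_Ioi.1 ht
      have h1 : Real.sqrt (1 + t ^ 2) ≤ 1 + t := by
        rw [show (1 + t : ℝ) = Real.sqrt ((1 + t) ^ 2) from (Real.sqrt_sq (by linarith)).symm]
        exact Real.sqrt_le_sqrt (by nlinarith)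
      have h2 : t - 2 ≤ t ^ 2 / (Real.sqrt (1 + t ^ 2) + 1) := by
        have hd : (0:ℝ) < Real.sqrt (1 + t ^ 2) + 1 := by positivity
        rw [le_div_iff₀ hd]
        nlinarith [Real.sqrt_nonneg (1 + t ^ 2)]
      rw [Real.norm_eq_abs, Real.abs_exp, ← Real.exp_add]
      exact Real.exp_le_exp.2 (by linarith)
    · filter_upwards [ae_restrict_mem measurableSet_Ioi] with t ht
      have ht0 : 0 < t := mem_Ioi.1 ht
      have hexp : Tendsto (fun β : ℝ =>
          Real.exp (β * (1 - Real.sqrt (1 + (1 / Real.sqrt β * t) ^ 2)))) atTop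
          (nhds (Real.exp (-(1/2) * t ^ 2))) := by
        have l1 : Tendsto (fun β : ℝ => t ^ 2 / β) atTop (nhds 0) := by
          simpa [div_eq_mul_inv] using tendsto_inv_atTop_zero.const_mul (t ^ 2)
        have l2 : Tendsto (fun β : ℝ => Real.sqrt (1 + t ^ 2 / β) + 1) atTop (nhds 2) := by
          have l2a : Tendsto (fun β : ℝ => 1 + t ^ 2 / β) atTop (nhds 1) := by
            simpa using l1.const_add 1
          have l2b := (Real.continuous_sqrt.tendsto 1).comp l2a
          have := l2b.add_const 1
          simpa [Real.sqrt_one, Function.comp, one_add_one_eq_two] using this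
        have harg : Tendsto (fun β : ℝ => -(t ^ 2 / (Real.sqrt (1 + t ^ 2 / β) + 1))) atTop
            (nhds (-(1/2) * t ^ 2)) := by
          have l3 := (tendsto_const_nhds (x := t ^ 2) (f := atTop)).div l2 two_ne_zero
          have := l3.neg
          rw [show -(1/2) * t ^ 2 = -(t ^ 2 / 2) by ring]
          exact this
        have hev : (fun β : ℝ => -(t ^ 2 / (Real.sqrt (1 + t ^ 2 / β) + 1)))
            =ᶠ[atTop] (fun β : ℝ => β * (1 - Real.sqrt (1 + (1 / Real.sqrt β * t) ^ 2))) := by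
          filter_upwards [eventually_ge_atTop (1:ℝ)] with β hβ
          have hβ0 : (0:ℝ) < β := lt_of_lt_of_le one_pos hβ
          have ha : (1 / Real.sqrt β * t) ^ 2 = t ^ 2 / β := by
            rw [mul_pow, div_pow, one_pow, Real.sq_sqrt hβ0.le]; ring
          have hβa : β * (t ^ 2 / β) = t ^ 2 := by field_simp
          rw [ha, key_id (by positivity) β, hβa]
        exact (Real.continuous_exp.tendsto _).comp (Tendsto.congr' hev harg)
      have := hexp.mul (hlim t ht0)
      simpa using this
  have heq : (fun β : ℝ => ∫ t in Ioi (0:ℝ),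
      Real.exp (β * (1 - Real.sqrt (1 + (1 / Real.sqrt β * t) ^ 2))) * h β (1 / Real.sqrt β * t))
      =ᶠ[atTop] (fun β : ℝ => Real.sqrt β
        * ∫ x in Ioi (0:ℝ), Real.exp (β * (1 - Real.sqrt (1 + x ^ 2))) * h β x) := by
    filter_upwards [eventually_ge_atTop (1:ℝ)] with β hβ
    have hβ0 : (0:ℝ) < β := lt_of_lt_of_le one_pos hβ
    have hb : 0 < 1 / Real.sqrt β := by positivity
    rw [integral_comp_mul_left_Ioi
      (fun x => Real.exp (β * (1 - Real.sqrt (1 + x ^ 2))) * h β x) 0 hb]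
    rw [mul_zero, smul_eq_mul, one_div, inv_inv]
  rw [show (∫ t in Ioi (0:ℝ), Real.exp (-(1/2) * t ^ 2)) = Real.sqrt (Real.pi / (1/2)) / 2 from
    integral_gaussian_Ioi (1/2)] at key
  exact Tendsto.congr' heq key

private lemma tendsto_aβ (t : ℝ) :
    Tendsto (fun β : ℝ => 1 + (1 / Real.sqrt β * t) ^ 2) atTop (nhds 1) := by
  have l1 : Tendsto (fun β : ℝ => 1 + t ^ 2 / β) atTop (nhds 1) := by
    simpa [div_eq_mul_inv] using (tendsto_inv_atTop_zero.const_mul (t ^ 2)).const_add 1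
  apply Tendsto.congr' _ l1
  filter_upwards [eventually_gt_atTop (0:ℝ)] with β hβ0
  rw [mul_pow, div_pow, one_pow, Real.sq_sqrt hβ0.le]
  ring

private lemma tendsto_sβ (t : ℝ) :
    Tendsto (fun β : ℝ => Real.sqrt (1 + (1 / Real.sqrt β * t) ^ 2)) atTop (nhds 1) := by
  have := (Real.continuous_sqrt.tendsto 1).comp (tendsto_aβ t)
  rw [Real.sqrt_one] at this
  exact this

private lemma limJ : Tendsto (fun β : ℝ => Real.sqrt β *
    ∫ z in Ioi (0:ℝ), Real.exp (β * (1 - Real.sqrt (1 + z ^ 2))) / Real.sqrt (1 + z ^ 2))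
    atTop (nhds (Real.sqrt (Real.pi / (1/2)) / 2)) := by
  have lm := laplace (fun _ x => (Real.sqrt (1 + x ^ 2))⁻¹)
    (fun β _ => by fun_prop)
    (fun β _ x _ => ⟨by positivity, inv_le_one_of_one_le₀ (one_le_s x)⟩)
    (fun t _ => by simpa using (tendsto_sβ t).inv₀ one_ne_zero)
  simpa [div_eq_mul_inv] using lm

private lemma limHigh : Tendsto (fun β : ℝ => Real.sqrt β *
    ∫ x in Ioi (0:ℝ), Real.exp (β * (1 - Real.sqrt (1 + x ^ 2))) * (1 + x ^ 2)⁻¹)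
    atTop (nhds (Real.sqrt (Real.pi / (1/2)) / 2)) := by
  exact laplace (fun _ x => (1 + x ^ 2)⁻¹)
    (fun β _ => by fun_prop)
    (fun β _ x _ => ⟨by positivity, inv_le_one_of_one_le₀ (by nlinarith [sq_nonneg x])⟩)
    (fun t _ => by simpa using (tendsto_aβ t).inv₀ one_ne_zero)

private lemma limLow : Tendsto (fun β : ℝ => Real.sqrt β *
    ∫ x in Ioi (0:ℝ), Real.exp (β * (1 - Real.sqrt (1 + x ^ 2)))
      * (β / (β * Real.sqrt (1 + x ^ 2) + 1)) ^ 2)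
    atTop (nhds (Real.sqrt (Real.pi / (1/2)) / 2)) := by
  apply laplace (fun β x => (β / (β * Real.sqrt (1 + x ^ 2) + 1)) ^ 2)
    (fun β _ => by fun_prop)
  · intro β hβ x _
    have hs1 := one_le_s x
    have hβ0 : (0:ℝ) < β := lt_of_lt_of_le one_pos hβ
    have hd : (0:ℝ) < β * Real.sqrt (1 + x ^ 2) + 1 := by positivity
    refine ⟨by positivity, pow_le_one₀ (by positivity) ?_⟩
    rw [div_le_one hd]
    nlinarith
  · intro t _
    have l1 : Tendsto (fun β : ℝ => Real.sqrt (1 + (1 / Real.sqrt β * t) ^ 2) + 1 / β) atTop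
        (nhds 1) := by
      have := (tendsto_sβ t).add ((tendsto_inv_atTop_zero (𝕜 := ℝ)).congr
        (fun β => (one_div β).symm))
      simpa using this
    have l2 := ((l1.inv₀ one_ne_zero).pow 2)
    apply Tendsto.congr' _ (by simpa using l2)
    filter_upwards [eventually_gt_atTop (0:ℝ)] with β hβ0
    have hs := s_pos (1 / Real.sqrt β * t)
    rw [← inv_pow]
    congr 1
    have hd : (0:ℝ) < β * Real.sqrt (1 + (1 / Real.sqrt β * t) ^ 2) + 1 := by positivity
    field_simp

private lemma I_meas {β : ℝ} (hβ : 0 < β) :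
    AEStronglyMeasurable
      (fun x : ℝ => ∫ y in Ioi x, y * Real.exp (β * (1 - Real.sqrt (1 + y ^ 2))) / (1 + y ^ 2))
      (volume.restrict (Ioi 0)) := by
  set f : ℝ → ℝ := fun y => y * Real.exp (β * (1 - Real.sqrt (1 + y ^ 2))) / (1 + y ^ 2) with hf
  have hIti : Antitone (fun x : ℝ => ∫ y in Ioi (max x 0), f y) := by
    intro x1 x2 hx12
    have hab : max x1 0 ≤ max x2 0 := max_le_max hx12 le_rfl
    have ha0 : (0:ℝ) ≤ max x1 0 := le_max_right _ _
    have hint := integrableOn_inner (x := max x1 0) hβ ha0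
    have h1 : 0 ≤ ∫ y in Ioc (max x1 0) (max x2 0), f y := by
      apply setIntegral_nonneg measurableSet_Ioc
      intro y hy
      have hy0 : 0 < y := lt_of_le_of_lt ha0 hy.1
      have := Real.exp_nonneg (β * (1 - Real.sqrt (1 + y ^ 2)))
      positivity
    have h2 : (∫ y in Ioi (max x1 0), f y)
        = (∫ y in Ioc (max x1 0) (max x2 0), f y) + ∫ y in Ioi (max x2 0), f y := by
      rw [← setIntegral_union (Ioc_disjoint_Ioi le_rfl) measurableSet_Ioi
        (hint.mono_set Ioc_subset_Ioi_self) (hint.mono_set (Ioi_subset_Ioi hab)),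
        Ioc_union_Ioi_eq_Ioi hab]
    simp only []
    linarith
  apply (hIti.measurable.aestronglyMeasurable).congr
  filter_upwards [ae_restrict_mem measurableSet_Ioi] with x hx
  rw [max_eq_left (le_of_lt (mem_Ioi.1 hx))]

private lemma int_hi {β : ℝ} (hβ : 0 < β) :
    IntegrableOn (fun x : ℝ => Real.exp (β * (1 - Real.sqrt (1 + x ^ 2))) * (1 + x ^ 2)⁻¹)
      (Ioi 0) := by
  refine Integrable.mono' ((exp_neg_integrableOn_Ioi 0 hβ).const_mul (Real.exp β))
    (Continuous.aestronglyMeasurable (by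
      exact (Real.continuous_exp.comp (by continuity)).mul
        (Continuous.inv₀ (by continuity) (fun x => by positivity)))) ?_
  filter_upwards [ae_restrict_mem measurableSet_Ioi] with x hx
  have h1 : (1 + x ^ 2)⁻¹ ≤ 1 := inv_le_one_of_one_le₀ (by nlinarith [sq_nonneg x])
  have h2 := exp_term_le hβ.le x
  rw [Real.norm_eq_abs, abs_of_nonneg (by positivity)]
  calc Real.exp (β * (1 - Real.sqrt (1 + x ^ 2))) * (1 + x ^ 2)⁻¹
      ≤ Real.exp (β * (1 - Real.sqrt (1 + x ^ 2))) * 1 :=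
        mul_le_mul_of_nonneg_left h1 (Real.exp_nonneg _)
  _ ≤ Real.exp β * Real.exp (-β * x) := by rwa [mul_one]

private lemma sandwich {β x : ℝ} (hβ : 1 ≤ β) (hx : 0 < x) :
    Real.exp (β * (1 - Real.sqrt (1 + x ^ 2))) * (β / (β * Real.sqrt (1 + x ^ 2) + 1)) ^ 2
      ≤ β ^ 2 * ((∫ y in Ioi x, y * Real.exp (β * (1 - Real.sqrt (1 + y ^ 2))) / (1 + y ^ 2)) ^ 2
          * Real.exp (β * (Real.sqrt (1 + x ^ 2) - 1)))
    ∧ β ^ 2 * ((∫ y in Ioi x, y * Real.exp (β * (1 - Real.sqrt (1 + y ^ 2))) / (1 + y ^ 2)) ^ 2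
          * Real.exp (β * (Real.sqrt (1 + x ^ 2) - 1)))
      ≤ Real.exp (β * (1 - Real.sqrt (1 + x ^ 2))) * (1 + x ^ 2)⁻¹ := by
  have hβ0 : (0:ℝ) < β := lt_of_lt_of_le one_pos hβ
  have hs : 0 < Real.sqrt (1 + x ^ 2) := s_pos x
  have hsq := sq_s x
  set s : ℝ := Real.sqrt (1 + x ^ 2)
  set I : ℝ := ∫ y in Ioi x, y * Real.exp (β * (1 - Real.sqrt (1 + y ^ 2))) / (1 + y ^ 2) with hI
  have hIle : I ≤ Real.exp (β * (1 - s)) / (β * s) := I_le hβ0 hx.le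
  have hIge : Real.exp (β * (1 - s)) / (β * s + 1) ≤ I := I_ge hβ0 hx.le
  have hI0 : 0 ≤ I := le_trans (by positivity) hIge
  have he : Real.exp (β * (1 - s)) * Real.exp (β * (s - 1)) = 1 := by
    rw [← Real.exp_add, show β * (1 - s) + β * (s - 1) = 0 from by ring, Real.exp_zero]
  constructor
  · calc Real.exp (β * (1 - s)) * (β / (β * s + 1)) ^ 2
        = β ^ 2 * ((Real.exp (β * (1 - s)) / (β * s + 1)) ^ 2 * Real.exp (β * (s - 1))) := by
          rw [div_pow, div_pow,
            show Real.exp (β * (1 - s)) * (β ^ 2 / (β * s + 1) ^ 2)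
              = (Real.exp (β * (1 - s)) * β ^ 2) / (β * s + 1) ^ 2 from by ring,
            show β ^ 2 * (Real.exp (β * (1 - s)) ^ 2 / (β * s + 1) ^ 2 * Real.exp (β * (s - 1)))
              = (β ^ 2 * (Real.exp (β * (1 - s)) ^ 2 * Real.exp (β * (s - 1)))) / (β * s + 1) ^ 2
              from by ring]
          congr 1
          linear_combination (-(β ^ 2) * Real.exp (β * (1 - s))) * he
    _ ≤ β ^ 2 * (I ^ 2 * Real.exp (β * (s - 1))) := by
          gcongr
  · calc β ^ 2 * (I ^ 2 * Real.exp (β * (s - 1)))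
        ≤ β ^ 2 * ((Real.exp (β * (1 - s)) / (β * s)) ^ 2 * Real.exp (β * (s - 1))) := by
          gcongr
    _ = Real.exp (β * (1 - s)) * (1 + x ^ 2)⁻¹ := by
          rw [← hsq, div_pow,
            show β ^ 2 * (Real.exp (β * (1 - s)) ^ 2 / (β * s) ^ 2 * Real.exp (β * (s - 1)))
              = β ^ 2 * (Real.exp (β * (1 - s)) * (Real.exp (β * (1 - s))
                * Real.exp (β * (s - 1)))) / (β * s) ^ 2 from by ring, he, mul_one,
            show β ^ 2 * Real.exp (β * (1 - s)) / (β * s) ^ 2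
              = Real.exp (β * (1 - s)) * (s ^ 2)⁻¹ * (β ^ 2 / β ^ 2) from by ring,
            div_self (pow_ne_zero 2 hβ0.ne'), mul_one]

private lemma int_main {β : ℝ} (hβ : 1 ≤ β) :
    IntegrableOn (fun x : ℝ => β ^ 2 *
      ((∫ y in Ioi x, y * Real.exp (β * (1 - Real.sqrt (1 + y ^ 2))) / (1 + y ^ 2)) ^ 2
        * Real.exp (β * (Real.sqrt (1 + x ^ 2) - 1)))) (Ioi 0) := by
  have hβ0 : (0:ℝ) < β := lt_of_lt_of_le one_pos hβ
  refine Integrable.mono' (int_hi hβ0) ?_ ?_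
  · have he : Continuous fun x : ℝ => Real.exp (β * (Real.sqrt (1 + x ^ 2) - 1)) :=
      Real.continuous_exp.comp (by continuity)
    exact ((((I_meas hβ0).pow 2).mul he.aestronglyMeasurable).const_mul (β ^ 2))
  · filter_upwards [ae_restrict_mem measurableSet_Ioi] with x hx
    rw [Real.norm_eq_abs, abs_of_nonneg (by positivity)]
    exact (sandwich hβ (mem_Ioi.1 hx)).2

private lemma limK : Tendsto (fun β : ℝ => Real.sqrt β * (β ^ 2 *
    ∫ x in Ioi (0:ℝ), (∫ y in Ioi x, y * Real.exp (β * (1 - Real.sqrt (1 + y ^ 2))) / (1 + y ^ 2)) ^ 2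
      * Real.exp (β * (Real.sqrt (1 + x ^ 2) - 1)))) atTop
    (nhds (Real.sqrt (Real.pi / (1/2)) / 2)) := by
  apply tendsto_of_tendsto_of_tendsto_of_le_of_le' limLow limHigh
  · filter_upwards [eventually_ge_atTop (1:ℝ)] with β hβ
    have hβ0 : (0:ℝ) < β := lt_of_lt_of_le one_pos hβ
    have h1 : (∫ x in Ioi (0:ℝ), Real.exp (β * (1 - Real.sqrt (1 + x ^ 2)))
          * (β / (β * Real.sqrt (1 + x ^ 2) + 1)) ^ 2)
        ≤ ∫ x in Ioi (0:ℝ), β ^ 2 *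
          ((∫ y in Ioi x, y * Real.exp (β * (1 - Real.sqrt (1 + y ^ 2))) / (1 + y ^ 2)) ^ 2
            * Real.exp (β * (Real.sqrt (1 + x ^ 2) - 1))) := by
      apply integral_mono_of_nonneg
      · filter_upwards [ae_restrict_mem measurableSet_Ioi] with x hx
        positivity
      · exact int_main hβ
      · filter_upwards [ae_restrict_mem measurableSet_Ioi] with x hx
        exact (sandwich hβ (mem_Ioi.1 hx)).1
    calc Real.sqrt β * ∫ x in Ioi (0:ℝ), Real.exp (β * (1 - Real.sqrt (1 + x ^ 2)))
          * (β / (β * Real.sqrt (1 + x ^ 2) + 1)) ^ 2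
        ≤ Real.sqrt β * ∫ x in Ioi (0:ℝ), β ^ 2 *
          ((∫ y in Ioi x, y * Real.exp (β * (1 - Real.sqrt (1 + y ^ 2))) / (1 + y ^ 2)) ^ 2
            * Real.exp (β * (Real.sqrt (1 + x ^ 2) - 1))) :=
          mul_le_mul_of_nonneg_left h1 (Real.sqrt_nonneg β)
    _ = _ := by rw [integral_const_mul]
  · filter_upwards [eventually_ge_atTop (1:ℝ)] with β hβ
    have hβ0 : (0:ℝ) < β := lt_of_lt_of_le one_pos hβ
    have h1 : (∫ x in Ioi (0:ℝ), β ^ 2 *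
          ((∫ y in Ioi x, y * Real.exp (β * (1 - Real.sqrt (1 + y ^ 2))) / (1 + y ^ 2)) ^ 2
            * Real.exp (β * (Real.sqrt (1 + x ^ 2) - 1))))
        ≤ ∫ x in Ioi (0:ℝ), Real.exp (β * (1 - Real.sqrt (1 + x ^ 2))) * (1 + x ^ 2)⁻¹ := by
      apply integral_mono_of_nonneg
      · filter_upwards [ae_restrict_mem measurableSet_Ioi] with x hx
        have h0 : 0 ≤ (∫ y in Ioi x, y * Real.exp (β * (1 - Real.sqrt (1 + y ^ 2))) / (1 + y ^ 2)) ^ 2 :=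
          sq_nonneg _
        positivity
      · exact int_hi hβ0
      · filter_upwards [ae_restrict_mem measurableSet_Ioi] with x hx
        exact (sandwich hβ (mem_Ioi.1 hx)).2
    calc Real.sqrt β * (β ^ 2 *
          ∫ x in Ioi (0:ℝ), (∫ y in Ioi x, y * Real.exp (β * (1 - Real.sqrt (1 + y ^ 2))) / (1 + y ^ 2)) ^ 2
            * Real.exp (β * (Real.sqrt (1 + x ^ 2) - 1)))
        = Real.sqrt β * ∫ x in Ioi (0:ℝ), β ^ 2 *
          ((∫ y in Ioi x, y * Real.exp (β * (1 - Real.sqrt (1 + y ^ 2))) / (1 + y ^ 2)) ^ 2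
            * Real.exp (β * (Real.sqrt (1 + x ^ 2) - 1))) := by rw [integral_const_mul]
    _ ≤ _ := mul_le_mul_of_nonneg_left h1 (Real.sqrt_nonneg β)

/-- As β → ∞, the limiting variance Σ_β² = K_β/J_β of the one-dimensional Dunkel–Hänggi
diffusion satisfies Σ_β² ∼ 2/β, i.e. β K_β / J_β → 2. -/
theorem stmt17 :
    Tendsto (fun β : ℝ => β *
        (2 * β * ∫ x in Ioi (0:ℝ),
          (∫ y in Ioi x, y * Real.exp (β * (1 - Real.sqrt (1 + y ^ 2))) / (1 + y ^ 2)) ^ 2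
            * Real.exp (β * (Real.sqrt (1 + x ^ 2) - 1)))
        / ∫ z in Ioi (0:ℝ), Real.exp (β * (1 - Real.sqrt (1 + z ^ 2))) / Real.sqrt (1 + z ^ 2))
      atTop (nhds 2) := by
  have hc : Real.sqrt (Real.pi / (1/2)) / 2 ≠ 0 := by positivity
  have hnum : Tendsto (fun β : ℝ => Real.sqrt β * (β *
      (2 * β * ∫ x in Ioi (0:ℝ),
        (∫ y in Ioi x, y * Real.exp (β * (1 - Real.sqrt (1 + y ^ 2))) / (1 + y ^ 2)) ^ 2
          * Real.exp (β * (Real.sqrt (1 + x ^ 2) - 1))))) atTop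
      (nhds (2 * (Real.sqrt (Real.pi / (1/2)) / 2))) := by
    exact (limK.const_mul 2).congr (fun β => by ring)
  have hdiv := hnum.div limJ hc
  rw [mul_div_assoc, div_self hc, mul_one] at hdiv
  apply Tendsto.congr' _ hdiv
  filter_upwards [eventually_gt_atTop (0:ℝ)] with β hβ0
  exact mul_div_mul_left _ _ (Real.sqrt_pos.2 hβ0).ne'
end
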